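/- arXiv:0709.2099 — 2 statements merged into one kernel-verified Lean document; each statement's English description precedes it below -/
import Mathlib

section
/- Let P be a simple d-polytope in E^d and let φ be the minimum angle between aff(I) and aff(F), where F ranges over all facets and I over all edges of P such that I and F have exactly one vertex in common. Then α ≤ √d / sin φ and α ≤ √d / (1 − γ). -/
noncomputable section

open Metric Set Finset Matrix
open scoped RealInnerProductSpace BigOperators Classical

namespace AverkovHenk

abbrev E (d : ℕ) := EuclideanSpace ℝ (Fin d)

/-- Support function `h(P,u)` of `P` in direction `u`. -/
def supp {d : ℕ} (P : Set (E d)) (u : E d) : ℝ :=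
  sSup ((fun x => ⟪u, x⟫) '' P)

/-- The normalized affine function `q_F` of the facet with outward unit normal `u`. -/
def qf {d : ℕ} (P : Set (E d)) (u : E d) (x : E d) : ℝ :=
  (supp P u - ⟪u, x⟫) / Metric.diam P

/-- The exposed face of `P` in direction `u`. -/
def faceOf {d : ℕ} (P : Set (E d)) (u : E d) : Set (E d) :=
  {x ∈ P | ⟪u, x⟫ = supp P u}

/-- `u` is an outward unit normal of a facet (a `(d-1)`-dimensional face) of `P`. -/
def IsFacetNormal {d : ℕ} (P : Set (E d)) (u : E d) : Prop :=
  ‖u‖ = 1 ∧ Module.finrank ℝ ↥(vectorSpan ℝ (faceOf P u)) = d - 1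

/-- The vertices of `P`, i.e. its extreme points. -/
def vertices {d : ℕ} (P : Set (E d)) : Set (E d) := Set.extremePoints ℝ P

/-- The `l`-th elementary symmetric function of `y_1, …, y_m`. -/
def esymm {m : ℕ} (y : Fin m → ℝ) (l : ℕ) : ℝ :=
  ∑ J ∈ Finset.powersetCard l (Finset.univ : Finset (Fin m)), ∏ j ∈ J, y j

/-- A presentation of a convex `d`-polytope `P ⊆ E^d` by the `m` outward unit normals
`u 0, …, u (m-1)` of its facets, together with the induced representation
`P = {x | q_j(x) ≥ 0 for all j}`. -/
structure FacetRep (d m : ℕ) where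
  P : Set (E d)
  u : Fin m → E d
  convex : Convex ℝ P
  compact : IsCompact P
  fulldim : (interior P).Nonempty
  inj : Function.Injective u
  facet : ∀ j, IsFacetNormal P (u j)
  complete : ∀ w : E d, IsFacetNormal P w → ∃ j, w = u j
  rep : P = {x | ∀ j, 0 ≤ qf P (u j) x}

namespace FacetRep

variable {d m : ℕ}

/-- The vector `q(x) = (q_1(x), …, q_m(x))`. -/
def q (R : FacetRep d m) (x : E d) : Fin m → ℝ := fun j => qf R.P (R.u j) x

/-- The indices of the facets containing the point `v`. -/
def act (R : FacetRep d m) (v : E d) : Finset (Fin m) :=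
  Finset.univ.filter fun j => R.q v j = 0

/-- The polytope is simple: each vertex lies on exactly `d` facets. -/
def Simple (R : FacetRep d m) : Prop :=
  ∀ v ∈ vertices R.P, (R.act v).card = d

/-- The enlarged polytope `P_ε`. -/
def Peps (R : FacetRep d m) (ε : ℝ) : Set (E d) := {x | ∀ j, -ε ≤ R.q x j}

/-- The box `Π_{v,ε} = {x : |q_v(x)|_∞ ≤ ε}`. -/
def Piv (R : FacetRep d m) (v : E d) (ε : ℝ) : Set (E d) :=
  {x | ∀ j ∈ R.act v, |R.q x j| ≤ ε}

/-- The cone `C_v = {x : -σ_1(q_v(x)) ≥ (2/3)|q_v(x)|}` (Euclidean norm). -/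
def Cv (R : FacetRep d m) (v : E d) : Set (E d) :=
  {x | (2/3) * Real.sqrt (∑ j ∈ R.act v, (R.q x j)^2) ≤ -(∑ j ∈ R.act v, R.q x j)}

/-- The polytope `P^v_{ε,δ}`. -/
def Pv (R : FacetRep d m) (v : E d) (ε δ : ℝ) : Set (E d) :=
  {x | (∀ j ∈ R.act v, -ε ≤ R.q x j) ∧ ∀ j ∉ R.act v, δ ≤ R.q x j}

/-- `γ = max{1 - q_F(v) : F a facet, v a vertex not on F}`. -/
def gam (R : FacetRep d m) : ℝ :=
  sSup {c | ∃ v ∈ vertices R.P, ∃ j, R.q v j ≠ 0 ∧ c = 1 - R.q v j}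

/-- The polynomial `f_k` built from weights `y_v` over the vertex set `V`. -/
def fk (R : FacetRep d m) (V : Finset (E d)) (y : ↥V → ℝ) (k : ℕ) (x : E d) : ℝ :=
  ∑ v : ↥V, y v * ((∑ j ∈ R.act v.1, (1 - R.q x j)^(2*k)) / (R.act v.1).card)^(2*k)

/-- The matrix `A_k` indexed by the vertex set `V`. -/
def Ak (R : FacetRep d m) (V : Finset (E d)) (k : ℕ) : Matrix ↥V ↥V ℝ :=
  Matrix.of fun w v : ↥V => ((∑ j ∈ R.act v.1, (1 - R.q w.1 j)^(2*k)) / (R.act v.1).card)^(2*k)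

/-- `deg(P)`: the maximal number of facets through a vertex. -/
def degP (R : FacetRep d m) (V : Finset (E d)) : ℕ := V.sup fun v => (R.act v).card

end FacetRep

/-- `|U_s^{-1}|_2` where `U_s` is the matrix with rows `u_j^T`, `j ∈ s`: the supremum of `‖x‖`
over the set where the Euclidean norm of `U_s x` is at most `1`. -/
def invNormU {d m : ℕ} (u : Fin m → E d) (s : Finset (Fin m)) : ℝ :=
  sSup {c | ∃ x : E d, Real.sqrt (∑ j ∈ s, (⟪u j, x⟫)^2) ≤ 1 ∧ c = ‖x‖}

/-- `α = max_{v ∈ vert(P)} |U_v^{-1}|_2`. -/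
def alpha {d m : ℕ} (R : FacetRep d m) (V : Finset (E d)) : ℝ :=
  sSup {a | ∃ v ∈ V, a = invNormU R.u (R.act v)}

/-- The normal cone `N(Q,x) = {u : ⟨x,u⟩ = h(Q,u)}`. -/
def normalCone {d : ℕ} (Q : Set (E d)) (x : E d) : Set (E d) :=
  {u | ⟪u, x⟫ = supp Q u}

/-- `S` is an edge (a 1-dimensional face) of `P`. -/
def IsEdgeOf {d : ℕ} (P S : Set (E d)) : Prop :=
  IsExposed ℝ P S ∧ Module.finrank ℝ ↥(vectorSpan ℝ S) = 1

-- ================= AUX =================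
namespace FacetRep
variable {d m : ℕ}

lemma continuous_inner_left {d : ℕ} (u : E d) : Continuous fun x : E d => ⟪u, x⟫ :=
  continuous_const.inner continuous_id

lemma bddAbove_inner (R : FacetRep d m) (u : E d) : BddAbove ((fun x => ⟪u, x⟫) '' R.P) :=
  (R.compact.image (continuous_inner_left u)).bddAbove

lemma inner_le_supp (R : FacetRep d m) {x : E d} (hx : x ∈ R.P) (u : E d) :
    ⟪u, x⟫ ≤ supp R.P u :=
  le_csSup (R.bddAbove_inner u) ⟨x, hx, rfl⟩

lemma vertex_memP (R : FacetRep d m) {v : E d} (hv : v ∈ vertices R.P) : v ∈ R.P :=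
  extremePoints_subset hv

lemma q_nonneg (R : FacetRep d m) {x : E d} (hx : x ∈ R.P) (j : Fin m) : 0 ≤ R.q x j := by
  have : x ∈ {x : E d | ∀ j, 0 ≤ qf R.P (R.u j) x} := R.rep ▸ hx
  exact this j

lemma memP_of_q_nonneg (R : FacetRep d m) {x : E d} (h : ∀ j, 0 ≤ R.q x j) : x ∈ R.P := by
  rw [R.rep]; exact h

lemma q_affine (R : FacetRep d m) (x y : E d) (t : ℝ) (j : Fin m) :
    R.q (x + t • y) j = R.q x j - t * ⟪R.u j, y⟫ / Metric.diam R.P := by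
  simp only [FacetRep.q, qf, inner_add_right, real_inner_smul_right]
  ring

lemma mem_act_iff (R : FacetRep d m) (v : E d) (j : Fin m) :
    j ∈ R.act v ↔ R.q v j = 0 := by simp [FacetRep.act]

lemma q_pos_of_not_act (R : FacetRep d m) {v : E d} (hv : v ∈ R.P) {j : Fin m}
    (hj : j ∉ R.act v) : 0 < R.q v j :=
  lt_of_le_of_ne (R.q_nonneg hv j) (Ne.symm (by simpa [R.mem_act_iff] using hj))

lemma diam_pos (R : FacetRep d m) (hd1 : 1 ≤ d) : 0 < Metric.diam R.P := by
  obtain ⟨x, hx⟩ := R.fulldim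
  obtain ⟨ε, hε, hball⟩ := Metric.isOpen_iff.mp isOpen_interior x hx
  set w : E d := EuclideanSpace.single (⟨0, hd1⟩ : Fin d) (ε/2) with hw
  have hwnorm : ‖w‖ = ε/2 := by
    rw [hw, EuclideanSpace.norm_single, Real.norm_eq_abs, abs_of_pos (by linarith)]
  have hy : x + w ∈ R.P := by
    apply interior_subset
    apply hball
    rw [Metric.mem_ball, dist_eq_norm, add_sub_cancel_left, hwnorm]
    linarith
  have hxP : x ∈ R.P := interior_subset hx
  have := Metric.dist_le_diam_of_mem R.compact.isBounded hy hxP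
  rw [dist_eq_norm, add_sub_cancel_left, hwnorm] at this
  linarith

lemma supp_eq_of_act (R : FacetRep d m) (hdiam : Metric.diam R.P ≠ 0) {v : E d} {j : Fin m}
    (hj : j ∈ R.act v) : ⟪R.u j, v⟫ = supp R.P (R.u j) := by
  have h0 : R.q v j = 0 := (R.mem_act_iff v j).1 hj
  have := div_eq_zero_iff.mp h0
  rcases this with h | h
  · linarith
  · exact absurd h hdiam


lemma continuous_q (R : FacetRep d m) (v z : E d) (j : Fin m) :
    Continuous fun t : ℝ => R.q (v + t • z) j := by
  simp only [R.q_affine]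
  exact continuous_const.sub ((continuous_mul_right _).div_const _)

lemma eventually_memP (R : FacetRep d m) {v : E d} (hv : v ∈ R.P) {z : E d}
    (hz : ∀ j ∈ R.act v, ⟪R.u j, z⟫ = 0) :
    ∀ᶠ t : ℝ in nhds 0, v + t • z ∈ R.P := by
  have key : ∀ j : Fin m, ∀ᶠ t : ℝ in nhds 0, 0 ≤ R.q (v + t • z) j := by
    intro j
    by_cases hj : j ∈ R.act v
    · filter_upwards with t
      rw [R.q_affine, hz j hj, mul_zero, zero_div, sub_zero]
      exact le_of_eq ((R.mem_act_iff v j).1 hj).symm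
    · have hq : 0 < R.q v j := R.q_pos_of_not_act hv hj
      have hc : ContinuousAt (fun t : ℝ => R.q (v + t • z) j) 0 :=
        (R.continuous_q v z j).continuousAt
      have h0 : (fun t : ℝ => R.q (v + t • z) j) 0 ∈ Set.Ioi (0:ℝ) := by
        simpa using hq
      filter_upwards [hc.preimage_mem_nhds (Ioi_mem_nhds (by simpa using hq))] with t ht
      exact le_of_lt ht
  filter_upwards [Filter.eventually_all.2 key] with t ht
  exact R.memP_of_q_nonneg ht

/-- The active outward normals at a vertex "span": only vector orthogonal to all of them is 0. -/
lemma eq_zero_of_inner_act (R : FacetRep d m) {v : E d} (hv : v ∈ vertices R.P)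
    {y : E d} (hy : ∀ j ∈ R.act v, ⟪R.u j, y⟫ = 0) : y = 0 := by
  by_contra hy0
  have h1 := R.eventually_memP (R.vertex_memP hv) hy
  have h2 := R.eventually_memP (R.vertex_memP hv) (z := -y) (fun j hj => by
    rw [inner_neg_right, hy j hj, neg_zero])
  have h3 : ∀ᶠ t : ℝ in nhdsWithin 0 (Set.Ioi (0:ℝ)),
      (v + t • y ∈ R.P ∧ v + t • (-y) ∈ R.P) ∧ t ∈ Set.Ioi (0:ℝ) :=
    (((h1.and h2).filter_mono nhdsWithin_le_nhds).and eventually_mem_nhdsWithin)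
  obtain ⟨t, ⟨hty, htny⟩, ht0⟩ := h3.exists
  have hseg : v ∈ openSegment ℝ (v + t • y) (v + t • (-y)) := by
    refine ⟨1/2, 1/2, by norm_num, by norm_num, by norm_num, ?_⟩
    module
  have := hv.2 hty htny hseg
  have h4 : t • y = 0 := by
    have h5 := this
    have : v + t • y - v = 0 := by rw [h5]; abel
    simpa using this
  rcases smul_eq_zero.mp h4 with h | h
  · exact absurd h (ne_of_gt ht0)
  · exact hy0 h

/-- Dual family: at a simple vertex, vectors `e j` with `⟪u i, e j⟫ = δ_{ij}` on active indices,
and every vector expands in them. -/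
lemma exists_dual (R : FacetRep d m) {v : E d} (hv : v ∈ vertices R.P)
    (hcard : (R.act v).card = d) :
    ∃ e : Fin m → E d,
      (∀ j ∈ R.act v, ∀ i ∈ R.act v, ⟪R.u i, e j⟫ = if i = j then 1 else 0) ∧
      ∀ x : E d, x = ∑ j ∈ R.act v, ⟪R.u j, x⟫ • e j := by
  classical
  set s := R.act v with hs
  let f : E d →ₗ[ℝ] (↥s → ℝ) :=
    LinearMap.pi fun i : ↥s => ((innerSL ℝ (R.u i.1)) : E d →L[ℝ] ℝ).toLinearMap
  have hfapp : ∀ (x : E d) (i : ↥s), f x i = ⟪R.u i.1, x⟫ := fun x i => rfl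
  have hfinj : Function.Injective f := by
    intro x y hxy
    have h0 : ∀ j ∈ R.act v, ⟪R.u j, x - y⟫ = 0 := by
      intro j hj
      have := congrFun hxy ⟨j, hj⟩
      rw [hfapp, hfapp] at this
      rw [inner_sub_right, this, sub_self]
    have := R.eq_zero_of_inner_act hv h0
    exact sub_eq_zero.mp this
  have hrank : Module.finrank ℝ (E d) = Module.finrank ℝ (↥s → ℝ) := by
    rw [Module.finrank_fintype_fun_eq_card, Fintype.card_coe, hcard]
    simp
  have hfsurj := (LinearMap.injective_iff_surjective_of_finrank_eq_finrank hrank).mp hfinj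
  choose g hg using hfsurj
  refine ⟨fun j => if hj : j ∈ s then g (Pi.single (⟨j, hj⟩ : ↥s) 1) else 0, ?_, ?_⟩
  · intro j hj i hi
    simp only [dif_pos hj]
    have := congrFun (hg (Pi.single (⟨j, hj⟩ : ↥s) 1)) ⟨i, hi⟩
    rw [hfapp] at this
    rw [this, Pi.single_apply]
    simp [Subtype.ext_iff]
  · intro x
    apply hfinj
    funext i
    rw [hfapp, map_sum]
    have : ∀ j ∈ s, f (⟪R.u j, x⟫ • (if hj : j ∈ s then g (Pi.single (⟨j, hj⟩ : ↥s) 1) else 0)) i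
        = if i.1 = j then ⟪R.u j, x⟫ else 0 := by
      intro j hj
      rw [dif_pos hj, LinearMap.map_smul, Pi.smul_apply, congrFun (hg _) i,
        Pi.single_apply, smul_eq_mul]
      by_cases hij : i.1 = j
      · rw [if_pos hij, if_pos (Subtype.ext hij), mul_one]
      · rw [if_neg hij, if_neg (fun h => hij (congrArg Subtype.val h)), mul_zero]
    rw [Finset.sum_apply, Finset.sum_congr rfl (fun j hj => this j hj),
      Finset.sum_ite_eq, if_pos i.2]

lemma edge_exists (R : FacetRep d m) (hd1 : 1 ≤ d)
    {v : E d} (hv : v ∈ vertices R.P)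
    {e : Fin m → E d}
    (hdual : ∀ j ∈ R.act v, ∀ i ∈ R.act v, ⟪R.u i, e j⟫ = if i = j then 1 else 0)
    (hexpand : ∀ x : E d, x = ∑ i ∈ R.act v, ⟪R.u i, x⟫ • e i)
    {j : Fin m} (hj : j ∈ R.act v) :
    ∃ S : Set (E d), IsEdgeOf R.P S ∧
      (vertices R.P ∩ S ∩ faceOf R.P (R.u j)).ncard = 1 ∧
      ∃ a ∈ S, ∃ b ∈ S, a ≠ b ∧
        Real.arcsin (|⟪R.u j, a - b⟫| / ‖a - b‖) = Real.arcsin (1 / ‖e j‖) := by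
  classical
  have hdiam : (0:ℝ) < Metric.diam R.P := R.diam_pos hd1
  have hvP : v ∈ R.P := R.vertex_memP hv
  have hej1 : ⟪R.u j, e j⟫ = 1 := by simpa using hdual j hj j hj
  have hej0 : e j ≠ 0 := by
    intro h
    rw [h, inner_zero_right] at hej1
    norm_num at hej1
  -- find a point of P of the form v + t • (-(e j)), t > 0
  have hmem : ∀ᶠ t : ℝ in nhdsWithin 0 (Set.Ioi (0:ℝ)),
      v + t • (-(e j)) ∈ R.P ∧ t ∈ Set.Ioi (0:ℝ) := by
    have key : ∀ i : Fin m, ∀ᶠ t : ℝ in nhdsWithin 0 (Set.Ioi (0:ℝ)),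
        0 ≤ R.q (v + t • (-(e j))) i := by
      intro i
      by_cases hi : i ∈ R.act v
      · apply eventually_mem_nhdsWithin.mono
        intro t ht
        rw [R.q_affine, (R.mem_act_iff v i).1 hi, inner_neg_right, hdual j hj i hi]
        by_cases hij : i = j
        · rw [if_pos hij]
          have htp : (0:ℝ) < t := ht
          simp only [mul_neg, mul_one, sub_neg_eq_add, zero_add, zero_sub, neg_neg, neg_div]
          exact div_nonneg (le_of_lt htp) Metric.diam_nonneg
        · rw [if_neg hij]; simp
      · have hq : 0 < R.q v i := R.q_pos_of_not_act hvP hi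
        have hc : ContinuousAt (fun t : ℝ => R.q (v + t • (-(e j))) i) 0 :=
          (R.continuous_q v _ i).continuousAt
        apply Filter.Eventually.filter_mono nhdsWithin_le_nhds
        filter_upwards [hc.preimage_mem_nhds (Ioi_mem_nhds (by simpa using hq))] with t ht
        exact le_of_lt ht
    have h1 := Filter.eventually_all.2 key
    filter_upwards [h1, eventually_mem_nhdsWithin] with t h1 h2
    exact ⟨R.memP_of_q_nonneg h1, h2⟩
  obtain ⟨t, haP, ht0⟩ := hmem.exists
  have ht0' : (0:ℝ) < t := ht0
  set a : E d := v + t • (-(e j)) with ha_def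
  -- the candidate edge
  set S : Set (E d) :=
    {x ∈ R.P | ∀ i ∈ (R.act v).erase j, ⟪R.u i, x⟫ = ⟪R.u i, v⟫} with hS_def
  have hbS : v ∈ S := ⟨hvP, fun i _ => rfl⟩
  have haS : a ∈ S := by
    refine ⟨haP, fun i hi => ?_⟩
    obtain ⟨hij, hiact⟩ := Finset.mem_erase.mp hi
    rw [ha_def, inner_add_right, real_inner_smul_right, inner_neg_right,
      hdual j hj i hiact, if_neg hij]
    ring
  have hab : a ≠ v := by
    intro h
    rw [ha_def] at h
    have : t • (-(e j)) = 0 := by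
      have := congrArg (fun z => z - v) h
      simpa [add_sub_cancel_left] using this
    rcases smul_eq_zero.mp this with h' | h'
    · exact absurd h' (ne_of_gt ht0')
    · exact hej0 (neg_eq_zero.mp h')
  -- erase-subset facts
  have herase_act : ∀ i ∈ (R.act v).erase j, i ∈ R.act v := fun i hi =>
    (Finset.mem_erase.mp hi).2
  -- S is exposed
  have hexposed : IsExposed ℝ R.P S := by
    intro _
    refine ⟨∑ i ∈ (R.act v).erase j, (innerSL ℝ (R.u i) : E d →L[ℝ] ℝ), ?_⟩
    have hlapp : ∀ x : E d,
        (∑ i ∈ (R.act v).erase j, (innerSL ℝ (R.u i) : E d →L[ℝ] ℝ)) x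
          = ∑ i ∈ (R.act v).erase j, ⟪R.u i, x⟫ := by
      intro x
      simp [ContinuousLinearMap.sum_apply]
    ext x
    simp only [Set.mem_setOf_eq, hS_def, hlapp]
    constructor
    · rintro ⟨hxP, hx⟩
      refine ⟨hxP, fun y hy => ?_⟩
      apply Finset.sum_le_sum
      intro i hi
      calc ⟪R.u i, y⟫ ≤ supp R.P (R.u i) := R.inner_le_supp hy _
        _ = ⟪R.u i, v⟫ := (R.supp_eq_of_act (ne_of_gt hdiam) (herase_act i hi)).symm
        _ = ⟪R.u i, x⟫ := (hx i hi).symm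
    · rintro ⟨hxP, hx⟩
      refine ⟨hxP, ?_⟩
      have hle : ∀ i ∈ (R.act v).erase j, ⟪R.u i, x⟫ ≤ ⟪R.u i, v⟫ := fun i hi => by
        rw [R.supp_eq_of_act (ne_of_gt hdiam) (herase_act i hi)]
        exact R.inner_le_supp hxP _
      have hsum : ∑ i ∈ (R.act v).erase j, ⟪R.u i, v⟫ ≤ ∑ i ∈ (R.act v).erase j, ⟪R.u i, x⟫ :=
        hx v hvP
      intro i hi
      exact (Finset.sum_eq_sum_iff_of_le hle).mp
        (le_antisymm (Finset.sum_le_sum hle) hsum) i hi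
  -- vectorSpan S = span {e j}
  have hvspan : vectorSpan ℝ S = Submodule.span ℝ {e j} := by
    apply le_antisymm
    · rw [vectorSpan_def]
      apply Submodule.span_le.mpr
      rintro w hw
      obtain ⟨p, hp, q', hq', rfl⟩ := Set.mem_vsub.mp hw
      have hzero : ∀ i ∈ (R.act v).erase j, ⟪R.u i, p - q'⟫ = 0 := by
        intro i hi
        rw [inner_sub_right, hp.2 i hi, hq'.2 i hi, sub_self]
      have hw_exp := hexpand (p - q')
      rw [Finset.sum_eq_single_of_mem j hj ?uniq] at hw_exp
      · rw [SetLike.mem_coe, Submodule.mem_span_singleton]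
        exact ⟨⟪R.u j, p - q'⟫, hw_exp.symm⟩
      case uniq =>
        intro i hi hij
        rw [hzero i (Finset.mem_erase.mpr ⟨hij, hi⟩), zero_smul]
    · apply Submodule.span_le.mpr
      rw [Set.singleton_subset_iff]
      have hsub : a - v ∈ vectorSpan ℝ S := vsub_mem_vectorSpan ℝ haS hbS
      have : e j = (-t)⁻¹ • (a - v) := by
        rw [ha_def, add_sub_cancel_left, smul_smul]
        rw [smul_neg, ← neg_smul]
        congr 1
        field_simp
        rw [one_smul]
      rw [this]
      exact Submodule.smul_mem _ _ hsub
  have hrank : Module.finrank ℝ ↥(vectorSpan ℝ S) = 1 := by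
    rw [hvspan]
    exact finrank_span_singleton hej0
  -- ncard
  have hsingle : vertices R.P ∩ S ∩ faceOf R.P (R.u j) = {v} := by
    apply Set.eq_singleton_iff_unique_mem.mpr
    refine ⟨⟨⟨hv, hbS⟩, hvP, (R.supp_eq_of_act (ne_of_gt hdiam) hj)⟩, ?_⟩
    rintro w ⟨⟨hwvert, hwS⟩, hwP, hwface⟩
    have hzero : ∀ i ∈ R.act v, ⟪R.u i, w - v⟫ = 0 := by
      intro i hi
      by_cases hij : i = j
      · subst hij
        rw [inner_sub_right, hwface, R.supp_eq_of_act (ne_of_gt hdiam) hi, sub_self]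
      · rw [inner_sub_right, hwS.2 i (Finset.mem_erase.mpr ⟨hij, hi⟩), sub_self]
    have := hexpand (w - v)
    rw [Finset.sum_congr rfl (fun i hi => by rw [hzero i hi, zero_smul])] at this
    rw [Finset.sum_const_zero] at this
    exact sub_eq_zero.mp this
  refine ⟨S, ⟨hexposed, hrank⟩, by rw [hsingle]; exact Set.ncard_singleton v, a, haS, v, hbS, hab, ?_⟩
  congr 1
  have hn : ‖e j‖ ≠ 0 := norm_ne_zero_iff.mpr hej0
  rw [ha_def, add_sub_cancel_left, real_inner_smul_right, inner_neg_right, hej1,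
    norm_smul, Real.norm_eq_abs, abs_of_pos ht0', norm_neg, mul_neg_one, abs_neg,
    abs_of_pos ht0']
  field_simp

lemma vertices_finite (R : FacetRep d m) (hd1 : 1 ≤ d) : (vertices R.P).Finite := by
  have hdiam : Metric.diam R.P ≠ 0 := ne_of_gt (R.diam_pos hd1)
  have hinj : Set.InjOn R.act (vertices R.P) := by
    intro x hx y hy hxy
    have hz : ∀ i ∈ R.act x, ⟪R.u i, x - y⟫ = 0 := fun i hi => by
      rw [inner_sub_right, R.supp_eq_of_act hdiam hi, R.supp_eq_of_act hdiam (hxy ▸ hi),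
        sub_self]
    exact sub_eq_zero.mp (R.eq_zero_of_inner_act hx hz)
  exact Set.Finite.of_finite_image (Set.toFinite _) hinj

lemma m_pos (R : FacetRep d m) (hd1 : 1 ≤ d) : m ≠ 0 := by
  intro hm
  subst hm
  have huniv : R.P = Set.univ := by
    rw [R.rep]; ext x; simp only [Set.mem_setOf_eq, Set.mem_univ, iff_true]
    exact fun j => j.elim0
  have hb := R.compact.isBounded
  rw [huniv] at hb
  obtain ⟨r, hr⟩ := hb.subset_closedBall 0
  have := hr (Set.mem_univ (EuclideanSpace.single (⟨0, hd1⟩ : Fin d) (|r| + 1)))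
  rw [Metric.mem_closedBall, dist_zero_right, EuclideanSpace.norm_single,
    Real.norm_eq_abs] at this
  have h1 : |r| + 1 ≤ |(|r| + 1)| := le_abs_self _
  have h2 : r ≤ |r| := le_abs_self r
  linarith

lemma exists_q_pos (R : FacetRep d m) (hd1 : 1 ≤ d) :
    ∃ v ∈ vertices R.P, ∃ j : Fin m, R.q v j ≠ 0 := by
  have hdiam : (0:ℝ) < Metric.diam R.P := R.diam_pos hd1
  by_contra hcon
  push_neg at hcon
  obtain ⟨j0⟩ : Nonempty (Fin m) := by
    rcases Nat.exists_eq_succ_of_ne_zero (R.m_pos hd1) with ⟨k, rfl⟩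
    exact ⟨0⟩
  set H : Set (E d) := {x | ⟪R.u j0, x⟫ = supp R.P (R.u j0)} with hH
  have hvert_sub : vertices R.P ⊆ H := by
    intro v hv
    have : j0 ∈ R.act v := (R.mem_act_iff v j0).2 (hcon v hv j0)
    exact R.supp_eq_of_act (ne_of_gt hdiam) this
  have hHconv : Convex ℝ H := by
    intro x hx y hy a b ha hb hab
    simp only [hH, Set.mem_setOf_eq] at *
    rw [inner_add_right, real_inner_smul_right, real_inner_smul_right, hx, hy, ← add_mul,
      hab, one_mul]
  have hHclosed : IsClosed H :=
    isClosed_eq (continuous_inner_left (R.u j0)) continuous_const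
  have hPH : R.P ⊆ H := by
    have hKM := closure_convexHull_extremePoints R.compact R.convex
    calc R.P = closure (convexHull ℝ (Set.extremePoints ℝ R.P)) := hKM.symm
      _ ⊆ closure (convexHull ℝ H) := by
          apply closure_mono; apply convexHull_mono; exact hvert_sub
      _ = closure H := by rw [hHconv.convexHull_eq]
      _ = H := hHclosed.closure_eq
  obtain ⟨x, hx⟩ := R.fulldim
  obtain ⟨ε, hε, hball⟩ := Metric.isOpen_iff.mp isOpen_interior x hx
  have hu1 : ‖R.u j0‖ = 1 := (R.facet j0).1
  have hy : x + (ε/2) • R.u j0 ∈ H := by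
    apply hPH; apply interior_subset; apply hball
    rw [Metric.mem_ball, dist_eq_norm, add_sub_cancel_left, norm_smul, Real.norm_eq_abs,
      abs_of_pos (by linarith), hu1]
    linarith
  have hx' : x ∈ H := hPH (interior_subset hx)
  rw [hH, Set.mem_setOf_eq, inner_add_right, real_inner_smul_right,
    real_inner_self_eq_norm_sq, hu1] at hy
  rw [hH, Set.mem_setOf_eq] at hx'
  nlinarith

lemma gam_facts (R : FacetRep d m) (hd1 : 1 ≤ d) :
    0 < 1 - R.gam ∧ ∀ v ∈ vertices R.P, ∀ j, R.q v j ≠ 0 → 1 - R.gam ≤ R.q v j := by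
  have hdiam : (0:ℝ) < Metric.diam R.P := R.diam_pos hd1
  set G : Set ℝ := {c | ∃ v ∈ vertices R.P, ∃ j, R.q v j ≠ 0 ∧ c = 1 - R.q v j} with hG
  have hgam : R.gam = sSup G := rfl
  have hfin : G.Finite := by
    have hsub : G ⊆ (fun p : E d × Fin m => 1 - R.q p.1 p.2) '' ((vertices R.P) ×ˢ Set.univ) := by
      rintro c ⟨v, hv, j, hj, rfl⟩
      exact ⟨(v, j), ⟨hv, Set.mem_univ _⟩, rfl⟩
    exact (((R.vertices_finite hd1).prod (Set.finite_univ)).image _).subset hsub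
  have hne : G.Nonempty := by
    obtain ⟨v, hv, j, hj⟩ := R.exists_q_pos hd1
    exact ⟨1 - R.q v j, v, hv, j, hj, rfl⟩
  have hmem : sSup G ∈ G := Set.Nonempty.csSup_mem hne hfin
  obtain ⟨v0, hv0, j0, hj0, hEq⟩ := hmem
  constructor
  · have : 0 < R.q v0 j0 :=
      lt_of_le_of_ne (R.q_nonneg (R.vertex_memP hv0) j0) (Ne.symm hj0)
    rw [hgam, hEq]
    linarith
  · intro v hv j hj
    have hle : 1 - R.q v j ≤ sSup G := le_csSup hfin.bddAbove ⟨v, hv, j, hj, rfl⟩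
    rw [hgam]
    linarith

lemma ratio_ge_one_sub_gam (R : FacetRep d m) (hd1 : 1 ≤ d)
    {j : Fin m} {S : Set (E d)} (hexp : IsExposed ℝ R.P S)
    (hrank : Module.finrank ℝ ↥(vectorSpan ℝ S) = 1)
    (hncard : (vertices R.P ∩ S ∩ faceOf R.P (R.u j)).ncard = 1)
    {a b : E d} (ha : a ∈ S) (hb : b ∈ S) (hab : a ≠ b) :
    1 - R.gam ≤ |⟪R.u j, a - b⟫| / ‖a - b‖ := by
  wlog hκ : 0 ≤ ⟪R.u j, a - b⟫ generalizing a b with HW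
  · have h := HW hb ha hab.symm (by
      rw [show b - a = -(a - b) by abel, inner_neg_right]
      linarith)
    rwa [show b - a = -(a - b) by abel, inner_neg_right, abs_neg, norm_neg] at h
  have hSP : S ⊆ R.P := hexp.subset
  have hdiam : (0:ℝ) < Metric.diam R.P := R.diam_pos hd1
  obtain ⟨hgam_pos, hgam_bd⟩ := R.gam_facts hd1
  have habne : a - b ≠ 0 := sub_ne_zero.mpr hab
  have hnormpos : 0 < ‖a - b‖ := norm_sub_pos_iff.mpr hab
  have hspan : vectorSpan ℝ S = Submodule.span ℝ {a - b} := by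
    have h1 : Submodule.span ℝ {a - b} ≤ vectorSpan ℝ S := by
      apply Submodule.span_le.mpr
      rw [Set.singleton_subset_iff]
      exact vsub_mem_vectorSpan ℝ ha hb
    refine (Submodule.eq_of_le_of_finrank_le h1 ?_).symm
    rw [hrank, finrank_span_singleton habne]
  set g : ℝ → E d := fun t => b + t • (a - b) with hg
  have hparam : ∀ x ∈ S, ∃ t : ℝ, x = g t := by
    intro x hx
    have hmem : x - b ∈ vectorSpan ℝ S := vsub_mem_vectorSpan ℝ hx hb
    rw [hspan, Submodule.mem_span_singleton] at hmem
    obtain ⟨t, ht⟩ := hmem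
    refine ⟨t, ?_⟩
    rw [hg]
    simp only
    rw [ht]
    abel
  have hginj : Function.Injective g := by
    intro s t hst
    simp only [hg] at hst
    have h1 : s • (a - b) = t • (a - b) := add_left_cancel hst
    have h2 : (s - t) • (a - b) = 0 := by rw [sub_smul, h1, sub_self]
    rcases smul_eq_zero.mp h2 with h | h
    · exact sub_eq_zero.mp h
    · exact absurd h habne
  set T : Set ℝ := g ⁻¹' S with hT
  have hT0 : (0:ℝ) ∈ T := by
    have : g 0 = b := by simp [hg]
    simpa [hT, Set.mem_preimage, this] using hb
  have hT1 : (1:ℝ) ∈ T := by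
    have : g 1 = a := by simp [hg]
    simpa [hT, Set.mem_preimage, this] using ha
  have hgaff : ∀ (α β s t : ℝ), α + β = 1 → α • g s + β • g t = g (α*s + β*t) := by
    intro α β s t hαβ
    have hb' : α • b + β • b = b := by rw [← add_smul, hαβ, one_smul]
    simp only [hg]
    calc α • (b + s • (a-b)) + β • (b + t • (a-b))
        = (α • b + β • b) + (α * s + β * t) • (a-b) := by
          simp only [smul_add, smul_smul, add_smul]; abel
      _ = b + (α*s+β*t) • (a-b) := by rw [hb']
  have hSconv : Convex ℝ S := hexp.convex R.convex
  have hTconv : Convex ℝ T := by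
    intro s hs t ht α β hα hβ hαβ
    have hmem := hSconv hs ht hα hβ hαβ
    rw [hT, Set.mem_preimage, smul_eq_mul, smul_eq_mul, ← hgaff α β s t hαβ]
    exact hmem
  have hgcont : Continuous g := continuous_const.add (continuous_id.smul continuous_const)
  have hTclosed : IsClosed T := (hexp.isClosed R.compact.isClosed).preimage hgcont
  have hTbdd : Bornology.IsBounded T := by
    apply (Metric.isBounded_Icc (-(Metric.diam R.P / ‖a - b‖)) (Metric.diam R.P / ‖a - b‖)).subset
    intro t ht
    have h1 : dist (g t) b ≤ Metric.diam R.P :=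
      Metric.dist_le_diam_of_mem R.compact.isBounded (hSP ht) (hSP hb)
    have h2 : dist (g t) b = |t| * ‖a-b‖ := by
      simp only [hg]
      rw [dist_eq_norm, add_sub_cancel_left, norm_smul, Real.norm_eq_abs]
    rw [h2] at h1
    have h3 : |t| ≤ Metric.diam R.P / ‖a - b‖ := by
      rw [le_div_iff₀ hnormpos]; exact h1
    exact Set.mem_Icc.mpr (abs_le.mp h3)
  have hTcomp : IsCompact T := Metric.isCompact_of_isClosed_isBounded hTclosed hTbdd
  have hTconn : IsConnected T := ⟨⟨0, hT0⟩, hTconv.isPreconnected⟩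
  have hIcc := eq_Icc_of_connected_compact hTconn hTcomp
  set t1 := sInf T with ht1def
  set t2 := sSup T with ht2def
  have h0mem : (0:ℝ) ∈ Set.Icc t1 t2 := hIcc ▸ hT0
  have h1mem : (1:ℝ) ∈ Set.Icc t1 t2 := hIcc ▸ hT1
  have h12 : t1 < t2 := lt_of_le_of_lt h0mem.1 (lt_of_lt_of_le one_pos h1mem.2)
  have ht1T : t1 ∈ T := by rw [hIcc]; exact Set.left_mem_Icc.mpr h12.le
  have ht2T : t2 ∈ T := by rw [hIcc]; exact Set.right_mem_Icc.mpr h12.le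
  have ht1min : ∀ s ∈ T, t1 ≤ s := fun s hs => (hIcc ▸ hs).1
  have ht2max : ∀ s ∈ T, s ≤ t2 := fun s hs => (hIcc ▸ hs).2
  have hext : ∀ t0 ∈ T, ((∀ s ∈ T, t0 ≤ s) ∨ (∀ s ∈ T, s ≤ t0)) →
      g t0 ∈ Set.extremePoints ℝ S := by
    rintro t0 ht0 hmm
    refine ⟨ht0, ?_⟩
    intro x1 hx1 x2 hx2 hseg
    obtain ⟨s1, rfl⟩ := hparam x1 hx1
    obtain ⟨s2, rfl⟩ := hparam x2 hx2
    have hs1T : s1 ∈ T := hx1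
    have hs2T : s2 ∈ T := hx2
    obtain ⟨α, β, hα, hβ, hαβ, heq⟩ := hseg
    have hgeq : g (α*s1 + β*s2) = g t0 := by rw [← hgaff α β s1 s2 hαβ]; exact heq
    have hsum : α*s1 + β*s2 = t0 := hginj hgeq
    have h5 : α*t0 + β*t0 = t0 := by rw [← add_mul, hαβ, one_mul]
    rcases hmm with hmin | hmax
    · have h1 : t0 ≤ s1 := hmin s1 hs1T
      have h2 : t0 ≤ s2 := hmin s2 hs2T
      have hs1 : s1 = t0 := by
        apply le_antisymm _ h1
        have h4 := mul_le_mul_of_nonneg_left h2 hβ.le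
        have h3 : α * s1 ≤ α * t0 := by linarith
        exact le_of_mul_le_mul_left h3 hα
      have hs2 : s2 = t0 := by
        apply le_antisymm _ h2
        have h4 := mul_le_mul_of_nonneg_left h1 hα.le
        have h3 : β * s2 ≤ β * t0 := by linarith
        exact le_of_mul_le_mul_left h3 hβ
      exact (by rw [hs1])
    · have h1 : s1 ≤ t0 := hmax s1 hs1T
      have h2 : s2 ≤ t0 := hmax s2 hs2T
      have hs1 : s1 = t0 := by
        apply le_antisymm h1
        have h4 := mul_le_mul_of_nonneg_left h2 hβ.le
        have h3 : α * t0 ≤ α * s1 := by linarith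
        exact le_of_mul_le_mul_left h3 hα
      have hs2 : s2 = t0 := by
        apply le_antisymm h2
        have h4 := mul_le_mul_of_nonneg_left h1 hα.le
        have h3 : β * t0 ≤ β * s2 := by linarith
        exact le_of_mul_le_mul_left h3 hβ
      exact (by rw [hs1])
  have hp_vert : g t1 ∈ vertices R.P :=
    hexp.isExtreme.extremePoints_subset_extremePoints (hext t1 ht1T (Or.inl ht1min))
  have hq_vert : g t2 ∈ vertices R.P :=
    hexp.isExtreme.extremePoints_subset_extremePoints (hext t2 ht2T (Or.inr ht2max))
  obtain ⟨w, hw⟩ := Set.ncard_eq_one.mp hncard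
  set κ := ⟪R.u j, a - b⟫ with hκdef
  have hslope : ∀ t : ℝ, ⟪R.u j, g t⟫ = ⟪R.u j, b⟫ + t * κ := by
    intro t
    simp only [hg]
    rw [inner_add_right, real_inner_smul_right]
  have hwmem : w ∈ vertices R.P ∩ S ∩ faceOf R.P (R.u j) := by
    rw [hw]; exact Set.mem_singleton w
  obtain ⟨⟨hwvert, hwS⟩, hwP, hwface⟩ := hwmem
  obtain ⟨tw, rfl⟩ := hparam w hwS
  have htwT : tw ∈ T := hwS
  rcases eq_or_lt_of_le hκ with hκ0 | hκpos
  · exfalso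
    have hbase : ⟪R.u j, b⟫ = supp R.P (R.u j) := by
      have := hwface
      rw [hslope, ← hκ0, mul_zero, add_zero] at this
      exact this
    have hface : ∀ t ∈ T, g t ∈ faceOf R.P (R.u j) := by
      intro t ht
      refine ⟨hSP ht, ?_⟩
      rw [hslope, ← hκ0, mul_zero, add_zero]
      exact hbase
    have h1 : g t1 ∈ ({g tw} : Set (E d)) := by
      rw [← hw]; exact ⟨⟨hp_vert, ht1T⟩, hface t1 ht1T⟩
    have h2 : g t2 ∈ ({g tw} : Set (E d)) := by
      rw [← hw]; exact ⟨⟨hq_vert, ht2T⟩, hface t2 ht2T⟩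
    have := hginj (h1.trans h2.symm)
    exact (ne_of_lt h12) this
  · have hq'face : ⟪R.u j, g t2⟫ = supp R.P (R.u j) := by
      have hle1 : ⟪R.u j, g t2⟫ ≤ supp R.P (R.u j) := R.inner_le_supp (hSP ht2T) _
      have hge : supp R.P (R.u j) ≤ ⟪R.u j, g t2⟫ := by
        rw [← hwface, hslope, hslope]
        have htw2 : tw ≤ t2 := ht2max tw htwT
        nlinarith
      linarith
    have hpface : ⟪R.u j, g t1⟫ < supp R.P (R.u j) := by
      rw [← hq'face, hslope, hslope]
      nlinarith
    have hqpos : R.q (g t1) j ≠ 0 := by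
      have h5 : 0 < R.q (g t1) j := div_pos (by linarith) hdiam
      exact ne_of_gt h5
    have hbd := hgam_bd (g t1) hp_vert j hqpos
    have hdist : (t2 - t1) * ‖a - b‖ ≤ Metric.diam R.P := by
      have h6 := Metric.dist_le_diam_of_mem R.compact.isBounded (hSP ht2T) (hSP ht1T)
      rw [dist_eq_norm] at h6
      have hnorm : g t2 - g t1 = (t2 - t1) • (a - b) := by
        simp only [hg]
        rw [add_sub_add_left_eq_sub, ← sub_smul]
      rw [hnorm, norm_smul, Real.norm_eq_abs, abs_of_pos (by linarith)] at h6
      exact h6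
    have hqval : R.q (g t1) j = (supp R.P (R.u j) - ⟪R.u j, g t1⟫) / Metric.diam R.P := rfl
    rw [hqval, ← hq'face, hslope, hslope] at hbd
    rw [abs_of_pos hκpos]
    have hfinal : (⟪R.u j, b⟫ + t2*κ - (⟪R.u j, b⟫ + t1*κ)) / Metric.diam R.P ≤ κ / ‖a - b‖ := by
      rw [div_le_div_iff₀ hdiam hnormpos]
      nlinarith [mul_le_mul_of_nonneg_left hdist hκpos.le]
    calc 1 - R.gam ≤ _ := hbd
      _ ≤ κ / ‖a - b‖ := hfinal

end FacetRep

theorem statement10 (d m : ℕ) (hd : 2 ≤ d) (R : FacetRep d m) (hs : R.Simple)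
    (V : Finset (E d)) (hV : (↑V : Set (E d)) = vertices R.P)
    (φ : ℝ)
    (hφ : IsLeast {θ : ℝ | ∃ j : Fin m, ∃ S : Set (E d), IsEdgeOf R.P S ∧
        (vertices R.P ∩ S ∩ faceOf R.P (R.u j)).ncard = 1 ∧
        ∃ a ∈ S, ∃ b ∈ S, a ≠ b ∧
          θ = Real.arcsin (|⟪R.u j, a - b⟫| / ‖a - b‖)} φ) :
    alpha R V ≤ Real.sqrt d / Real.sin φ ∧ alpha R V ≤ Real.sqrt d / (1 - R.gam) := by
  have hd1 : 1 ≤ d := le_trans one_le_two hd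
  obtain ⟨hgam_pos, hgam_bd⟩ := R.gam_facts hd1
  obtain ⟨j0, S0, hedge0, hncard0, a0, ha0, b0, hb0, hab0, hφeq⟩ := hφ.1
  have hnorm0 : (0:ℝ) < ‖a0 - b0‖ := norm_sub_pos_iff.mpr hab0
  have hu0 : ‖R.u j0‖ = 1 := (R.facet j0).1
  have hratio_le_one : |⟪R.u j0, a0 - b0⟫| / ‖a0 - b0‖ ≤ 1 := by
    rw [div_le_one hnorm0]
    calc |⟪R.u j0, a0 - b0⟫| ≤ ‖R.u j0‖ * ‖a0 - b0‖ := abs_real_inner_le_norm _ _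
      _ = ‖a0 - b0‖ := by rw [hu0, one_mul]
  have hratio_nonneg : (0:ℝ) ≤ |⟪R.u j0, a0 - b0⟫| / ‖a0 - b0‖ :=
    div_nonneg (abs_nonneg _) (norm_nonneg _)
  have hsinφ : Real.sin φ = |⟪R.u j0, a0 - b0⟫| / ‖a0 - b0‖ := by
    rw [hφeq, Real.sin_arcsin (by linarith) hratio_le_one]
  have hsin_ge : 1 - R.gam ≤ Real.sin φ := by
    rw [hsinφ]
    exact R.ratio_ge_one_sub_gam hd1 hedge0.1 hedge0.2 hncard0 ha0 hb0 hab0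
  have hsinpos : 0 < Real.sin φ := lt_of_lt_of_le hgam_pos hsin_ge
  have hsqrtd : (0:ℝ) ≤ Real.sqrt d := Real.sqrt_nonneg _
  have hB : (0:ℝ) ≤ Real.sqrt d / Real.sin φ := div_nonneg hsqrtd hsinpos.le
  have hφIcc : φ ∈ Set.Icc (-(Real.pi/2)) (Real.pi/2) := hφeq ▸ Real.arcsin_mem_Icc _
  have hmain : alpha R V ≤ Real.sqrt d / Real.sin φ := by
    unfold alpha
    apply Real.sSup_le _ hB
    rintro x ⟨v, hvV, rfl⟩
    have hv : v ∈ vertices R.P := by rw [← hV]; exact hvV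
    have hcard := hs v hv
    obtain ⟨e, hdual, hexpand⟩ := R.exists_dual hv hcard
    have hbound : ∀ j ∈ R.act v, ‖e j‖ * Real.sin φ ≤ 1 := by
      intro j hj
      obtain ⟨S, hedge, hncard, a, ha, b, hb, hab, hangle⟩ :=
        R.edge_exists hd1 hv hdual hexpand hj
      have hejnorm : (1:ℝ) ≤ ‖e j‖ := by
        have h1 : ⟪R.u j, e j⟫ = 1 := by simpa using hdual j hj j hj
        have h2 := real_inner_le_norm (R.u j) (e j)
        rw [h1, (R.facet j).1, one_mul] at h2
        exact h2
      have hepos : (0:ℝ) < ‖e j‖ := lt_of_lt_of_le one_pos hejnorm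
      have hφle : φ ≤ Real.arcsin (1 / ‖e j‖) := by
        rw [← hangle]
        exact hφ.2 ⟨j, S, hedge, hncard, a, ha, b, hb, hab, rfl⟩
      have hsinle : Real.sin φ ≤ 1 / ‖e j‖ := by
        have hmono := Real.strictMonoOn_sin.monotoneOn hφIcc (Real.arcsin_mem_Icc _) hφle
        rwa [Real.sin_arcsin (le_trans (by norm_num : (-1:ℝ) ≤ 0) (by positivity))
          (by rw [div_le_one hepos]; exact hejnorm)] at hmono
      calc ‖e j‖ * Real.sin φ ≤ ‖e j‖ * (1/‖e j‖) :=
            mul_le_mul_of_nonneg_left hsinle (norm_nonneg _)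
        _ = 1 := by field_simp
    unfold invNormU
    apply Real.sSup_le _ hB
    rintro c ⟨x, hx1, rfl⟩
    have hsum_sq : ∑ j ∈ R.act v, (⟪R.u j, x⟫)^2 ≤ 1 := by
      have h0 : (0:ℝ) ≤ ∑ j ∈ R.act v, (⟪R.u j, x⟫)^2 :=
        Finset.sum_nonneg fun j _ => sq_nonneg _
      nlinarith [Real.sq_sqrt h0, Real.sqrt_nonneg (∑ j ∈ R.act v, (⟪R.u j, x⟫)^2)]
    have habs : ∑ j ∈ R.act v, |⟪R.u j, x⟫| ≤ Real.sqrt d := by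
      have h1 : (∑ j ∈ R.act v, |⟪R.u j, x⟫|)^2 ≤ (d:ℝ) * ∑ j ∈ R.act v, (⟪R.u j, x⟫)^2 := by
        have h := sq_sum_le_card_mul_sum_sq (s := R.act v) (f := fun j => |⟪R.u j, x⟫|)
        rw [hcard] at h
        simpa [sq_abs] using h
      have h2 : (∑ j ∈ R.act v, |⟪R.u j, x⟫|)^2 ≤ (d:ℝ) := by nlinarith
      have h3 : (0:ℝ) ≤ ∑ j ∈ R.act v, |⟪R.u j, x⟫| :=
        Finset.sum_nonneg fun j _ => abs_nonneg _
      nlinarith [Real.sq_sqrt (show (0:ℝ) ≤ (d:ℝ) by positivity), Real.sqrt_nonneg (d:ℝ)]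
    have hstep : ∀ j ∈ R.act v, |⟪R.u j, x⟫| * ‖e j‖ ≤ |⟪R.u j, x⟫| * (1 / Real.sin φ) := by
      intro j hj
      apply mul_le_mul_of_nonneg_left _ (abs_nonneg _)
      rw [le_div_iff₀ hsinpos]
      exact hbound j hj
    calc ‖x‖ = ‖∑ j ∈ R.act v, ⟪R.u j, x⟫ • e j‖ := by rw [← hexpand x]
      _ ≤ ∑ j ∈ R.act v, ‖⟪R.u j, x⟫ • e j‖ := norm_sum_le _ _
      _ = ∑ j ∈ R.act v, |⟪R.u j, x⟫| * ‖e j‖ := by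
          refine Finset.sum_congr rfl fun j hj => ?_
          rw [norm_smul, Real.norm_eq_abs]
      _ ≤ ∑ j ∈ R.act v, |⟪R.u j, x⟫| * (1 / Real.sin φ) := Finset.sum_le_sum hstep
      _ = (∑ j ∈ R.act v, |⟪R.u j, x⟫|) * (1 / Real.sin φ) := by rw [← Finset.sum_mul]
      _ ≤ Real.sqrt d * (1 / Real.sin φ) :=
          mul_le_mul_of_nonneg_right habs (by positivity)
      _ = Real.sqrt d / Real.sin φ := by ring
  refine ⟨hmain, le_trans hmain ?_⟩
  exact div_le_div_of_nonneg_left hsqrtd hgam_pos hsin_ge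

end AverkovHenk
end
end

section
/- Let P be a simple d-polytope in E^d and let ε ≥ 0 satisfy ε < (1 − γ)/(√d · α). For each vertex v of P let v_ε be the point determined by the d equations q_F(v_ε) = −ε for all facets F containing v. Then: (i) vert(P_ε) = {v_ε : v ∈ vert(P)}; (ii) N(P_ε, v_ε) = N(P, v) for every vertex v; (iii) q_F(x) ≤ 2 for every facet F and every x ∈ P_ε; (iv) q_F(v_ε) ≥ −ε·√d·α for every vertex v and every facet F; (v) q_F(v_ε) ≥ 1 − γ − ε·√d·α > 0 for every vertex v and every facet F not containing v. -/
noncomputable section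

open Metric Set Finset Matrix
open scoped RealInnerProductSpace BigOperators Classical

namespace AverkovHenk

section Aux

variable {d m : ℕ}

lemma Pne (R : FacetRep d m) : R.P.Nonempty := R.fulldim.mono interior_subset

lemma inner_cont (y : E d) : Continuous fun x : E d => (⟪y, x⟫ : ℝ) := (innerSL ℝ y).continuous

lemma exists_supp_attained (R : FacetRep d m) (u : E d) :
    ∃ z ∈ R.P, ⟪u, z⟫ = supp R.P u ∧ ∀ x ∈ R.P, ⟪u, x⟫ ≤ supp R.P u := by
  obtain ⟨z, hz, hmax⟩ := R.compact.exists_isMaxOn (Pne R) (inner_cont u).continuousOn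
  have hgr : IsGreatest ((fun x => (⟪u, x⟫ : ℝ)) '' R.P) ⟪u, z⟫ := by
    constructor
    · exact Set.mem_image_of_mem _ hz
    · rintro c ⟨x, hx, rfl⟩
      exact hmax hx
  have : supp R.P u = ⟪u, z⟫ := hgr.csSup_eq
  exact ⟨z, hz, this.symm, fun x hx => this ▸ hmax hx⟩

lemma inner_le_supp (R : FacetRep d m) {u x : E d} (hx : x ∈ R.P) : ⟪u, x⟫ ≤ supp R.P u := by
  obtain ⟨z, _, _, h⟩ := exists_supp_attained R u
  exact h x hx

lemma q_def (R : FacetRep d m) (x : E d) (j : Fin m) :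
    R.q x j = (supp R.P (R.u j) - ⟪R.u j, x⟫) / Metric.diam R.P := rfl

lemma q_nonneg (R : FacetRep d m) {x : E d} (hx : x ∈ R.P) (j : Fin m) : 0 ≤ R.q x j := by
  have := R.rep
  rw [Set.ext_iff] at this
  exact ((this x).mp hx) j

lemma diam_pos (R : FacetRep d m) (hd : 2 ≤ d) : 0 < Metric.diam R.P := by
  obtain ⟨x₀, hx₀⟩ := R.fulldim
  obtain ⟨r, hr, hball⟩ := Metric.isOpen_iff.mp isOpen_interior x₀ hx₀
  set y : E d := EuclideanSpace.single (⟨0, by omega⟩ : Fin d) (1 : ℝ)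
  have hy : ‖y‖ = 1 := by simp [y]
  have h1 : x₀ ∈ R.P := interior_subset hx₀
  have hdist : dist (x₀ + (r/2) • y) x₀ = r/2 := by
    rw [dist_self_add_left, norm_smul, hy, mul_one, Real.norm_eq_abs,
      abs_of_pos (by linarith : (0:ℝ) < r/2)]
  have h2 : x₀ + (r/2) • y ∈ R.P := by
    apply interior_subset; apply hball
    rw [Metric.mem_ball, hdist]; linarith
  have := Metric.dist_le_diam_of_mem R.compact.isBounded h2 h1
  rw [hdist] at this
  linarith

lemma mem_P_iff (R : FacetRep d m) (hD : 0 < Metric.diam R.P) (x : E d) :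
    x ∈ R.P ↔ ∀ j, ⟪R.u j, x⟫ ≤ supp R.P (R.u j) := by
  have h := Set.ext_iff.mp R.rep x
  rw [h]
  simp only [Set.mem_setOf_eq]
  refine forall_congr' fun j => ?_
  rw [show qf R.P (R.u j) x = (supp R.P (R.u j) - ⟪R.u j, x⟫) / Metric.diam R.P from rfl,
    le_div_iff₀ hD]
  constructor <;> intro h' <;> linarith

lemma mem_Peps_iff (R : FacetRep d m) (hD : 0 < Metric.diam R.P) (ε : ℝ) (x : E d) :
    x ∈ R.Peps ε ↔ ∀ j, ⟪R.u j, x⟫ ≤ supp R.P (R.u j) + ε * Metric.diam R.P := by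
  show (∀ j, -ε ≤ R.q x j) ↔ _
  refine forall_congr' fun j => ?_
  rw [q_def, le_div_iff₀ hD]
  constructor <;> intro h' <;> nlinarith

end Aux
section Aux2

variable {d m : ℕ}

lemma q_combo (R : FacetRep d m) {a b : ℝ} (hab : a + b = 1) (x y : E d) (j : Fin m) :
    R.q (a • x + b • y) j = a * R.q x j + b * R.q y j := by
  rw [q_def, q_def, q_def, inner_add_right, real_inner_smul_right, real_inner_smul_right,
    mul_div_assoc', mul_div_assoc', ← add_div]
  congr 1
  linear_combination (- supp R.P (R.u j)) * hab

lemma q_add_smul (R : FacetRep d m) (x : E d) (t : ℝ) (y : E d) (j : Fin m) :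
    R.q (x + t • y) j = R.q x j - t * ⟪R.u j, y⟫ / Metric.diam R.P := by
  rw [q_def, q_def, inner_add_right, real_inner_smul_right, ← sub_div]
  ring_nf

lemma mem_act (R : FacetRep d m) {v : E d} {j : Fin m} : j ∈ R.act v ↔ R.q v j = 0 := by
  simp [FacetRep.act]

lemma q_pos_of_not_act (R : FacetRep d m) {v : E d} (hv : v ∈ R.P) {j : Fin m}
    (hj : j ∉ R.act v) : 0 < R.q v j :=
  lt_of_le_of_ne (q_nonneg R hv j) (Ne.symm (by simpa [mem_act] using hj))

lemma q_le_one (R : FacetRep d m) (hD : 0 < Metric.diam R.P) {x : E d} (hx : x ∈ R.P)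
    (j : Fin m) : R.q x j ≤ 1 := by
  obtain ⟨z, hz, hzeq, -⟩ := exists_supp_attained R (R.u j)
  rw [q_def, div_le_one hD, ← hzeq]
  have h1 : ⟪R.u j, z⟫ - ⟪R.u j, x⟫ = ⟪R.u j, z - x⟫ := (inner_sub_right _ _ _).symm
  have h2 : |⟪R.u j, z - x⟫| ≤ ‖R.u j‖ * ‖z - x‖ := abs_real_inner_le_norm _ _
  rw [(R.facet j).1, one_mul] at h2
  have h3 : ‖z - x‖ = dist z x := (dist_eq_norm _ _).symm
  have h4 : dist z x ≤ Metric.diam R.P := Metric.dist_le_diam_of_mem R.compact.isBounded hz hx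
  calc ⟪R.u j, z⟫ - ⟪R.u j, x⟫ ≤ |⟪R.u j, z - x⟫| := h1 ▸ le_abs_self _
    _ ≤ Metric.diam R.P := by rw [h3] at h2; linarith

/-- Perturbation lemma: a point of `P` all whose inactive constraints are strict can be moved
along any direction orthogonal-negative to the active normals, staying in `P`-like sets. -/
lemma span_act (R : FacetRep d m) {v : E d} (hv : v ∈ vertices R.P)
    (hD : 0 < Metric.diam R.P) {y : E d} (hy : ∀ j ∈ R.act v, ⟪R.u j, y⟫ = 0) : y = 0 := by
  by_contra hy0
  have hvP : v ∈ R.P := hv.1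
  set s : Finset (Fin m) := Finset.univ.filter (fun j => j ∉ R.act v) with hs
  set cs : Finset ℝ := insert (1:ℝ) (s.image fun j => R.q v j) with hcs
  have hcsne : cs.Nonempty := ⟨1, Finset.mem_insert_self _ _⟩
  set c : ℝ := cs.min' hcsne with hc
  have hc0 : 0 < c := by
    rw [hc, Finset.lt_min'_iff]
    intro z hz
    rw [hcs] at hz
    rcases Finset.mem_insert.mp hz with h | h
    · simp [h]
    · obtain ⟨j, hj, rfl⟩ := Finset.mem_image.mp h
      exact q_pos_of_not_act R hvP (by simpa [hs] using hj)
  have hcle : ∀ j, j ∉ R.act v → c ≤ R.q v j := by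
    intro j hj
    exact Finset.min'_le _ _ (Finset.mem_insert_of_mem (Finset.mem_image_of_mem _
      (by simp [hs, hj])))
  set t : ℝ := c * Metric.diam R.P / ‖y‖ with hts
  have ht : 0 < t := div_pos (mul_pos hc0 hD) (norm_pos_iff.mpr hy0)
  have hmem : ∀ σ : ℝ, |σ| = 1 → v + (σ * t) • y ∈ R.P := by
    intro σ hσ
    have hrep := Set.ext_iff.mp R.rep (v + (σ * t) • y)
    rw [hrep]
    intro j
    show (0:ℝ) ≤ R.q (v + (σ * t) • y) j
    rw [q_add_smul]
    by_cases hj : j ∈ R.act v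
    · rw [hy j hj]
      have := (mem_act R).mp hj
      simp [this]
    · have h1 : c ≤ R.q v j := hcle j hj
      have h2 : |σ * t * ⟪R.u j, y⟫| ≤ t * ‖y‖ := by
        rw [abs_mul, abs_mul, hσ, one_mul, abs_of_pos ht]
        have := abs_real_inner_le_norm (R.u j) y
        rw [(R.facet j).1, one_mul] at this
        exact mul_le_mul_of_nonneg_left this ht.le
      have h3 : t * ‖y‖ = c * Metric.diam R.P := by
        rw [hts, div_mul_eq_mul_div, mul_div_assoc, div_self (norm_pos_iff.mpr hy0).ne',
          mul_one]
      have h4 : σ * t * ⟪R.u j, y⟫ / Metric.diam R.P ≤ c := by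
        rw [div_le_iff₀ hD]
        calc σ * t * ⟪R.u j, y⟫ ≤ |σ * t * ⟪R.u j, y⟫| := le_abs_self _
          _ ≤ c * Metric.diam R.P := by rw [← h3]; exact h2
      linarith
  have h₁ := hmem 1 (by norm_num)
  have h₂ := hmem (-1) (by norm_num)
  rw [one_mul] at h₁
  have hseg : v ∈ openSegment ℝ (v + t • y) (v + (-1 * t) • y) := by
    refine ⟨1/2, 1/2, by norm_num, by norm_num, by norm_num, ?_⟩
    module
  obtain ⟨-, hvext⟩ := mem_extremePoints.mp hv
  have := (hvext _ h₁ _ h₂ hseg).1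
  have hty : t • y = 0 := by
    have := congrArg (fun z => z - v) this
    simpa using this
  exact hy0 (by simpa [smul_eq_zero, ht.ne'] using hty)

lemma span_top (R : FacetRep d m) {v : E d} (hv : v ∈ vertices R.P)
    (hD : 0 < Metric.diam R.P) :
    Submodule.span ℝ (Set.range fun j : ↥(R.act v) => R.u j) = ⊤ := by
  rw [← Submodule.orthogonal_eq_bot_iff, Submodule.eq_bot_iff]
  intro y hy
  apply span_act R hv hD
  intro j hj
  exact (Submodule.mem_orthogonal _ y).mp hy (R.u j)
    (Submodule.subset_span ⟨⟨j, hj⟩, rfl⟩)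

/-- The active normals at a vertex of a simple polytope form a basis. -/
def actBasis (R : FacetRep d m) {v : E d} (hv : v ∈ vertices R.P)
    (hD : 0 < Metric.diam R.P) (hcard : (R.act v).card = d) : Module.Basis ↥(R.act v) ℝ (E d) :=
  basisOfTopLeSpanOfCardEqFinrank (fun j : ↥(R.act v) => R.u j)
    (le_of_eq (span_top R hv hD).symm)
    (by simp [Fintype.card_coe, hcard, finrank_euclideanSpace])

lemma actBasis_coe (R : FacetRep d m) {v : E d} (hv : v ∈ vertices R.P)
    (hD : 0 < Metric.diam R.P) (hcard : (R.act v).card = d) :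
    ⇑(actBasis R hv hD hcard) = fun j : ↥(R.act v) => R.u j :=
  coe_basisOfTopLeSpanOfCardEqFinrank _ _ _

end Aux2
section Aux3

variable {d m : ℕ}

/-- The coordinate map sending `x` to its inner products with the active normals. -/
def Tmap (R : FacetRep d m) (v : E d) : E d →ₗ[ℝ] EuclideanSpace ℝ ↥(R.act v) where
  toFun := fun x => WithLp.toLp 2 (fun j => ⟪R.u j.1, x⟫ : ↥(R.act v) → ℝ)
  map_add' := by
    intro a b
    ext j
    exact inner_add_right _ _ _
  map_smul' := by
    intro r a
    ext j
    exact real_inner_smul_right _ _ _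

lemma Tmap_apply (R : FacetRep d m) (v : E d) (x : E d) (j : ↥(R.act v)) :
    Tmap R v x j = ⟪R.u j.1, x⟫ := rfl

lemma Tmap_norm (R : FacetRep d m) (v : E d) (x : E d) :
    ‖Tmap R v x‖ = Real.sqrt (∑ j ∈ R.act v, (⟪R.u j, x⟫)^2) := by
  rw [EuclideanSpace.norm_eq]
  congr 1
  rw [← Finset.sum_coe_sort (R.act v) (fun j => (⟪R.u j, x⟫)^2)]
  refine Finset.sum_congr rfl fun j _ => ?_
  rw [Tmap_apply, Real.norm_eq_abs, sq_abs]

lemma Tmap_inj (R : FacetRep d m) {v : E d} (hv : v ∈ vertices R.P)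
    (hD : 0 < Metric.diam R.P) : Function.Injective (Tmap R v) := by
  have h0 : ∀ x, Tmap R v x = 0 → x = 0 := by
    intro x hx
    apply span_act R hv hD
    intro j hj
    have := congrArg (fun z : EuclideanSpace ℝ ↥(R.act v) => z ⟨j, hj⟩) hx
    simpa [Tmap_apply] using this
  intro a b hab
  have : Tmap R v (a - b) = 0 := by rw [map_sub, hab, sub_self]
  exact sub_eq_zero.mp (h0 _ this)

lemma norm_le_invNormU (R : FacetRep d m) {v : E d} (hv : v ∈ vertices R.P)
    (hD : 0 < Metric.diam R.P) (hcard : (R.act v).card = d) :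
    (∀ x : E d, ‖x‖ ≤ invNormU R.u (R.act v) * Real.sqrt (∑ j ∈ R.act v, (⟪R.u j, x⟫)^2)) ∧
      0 ≤ invNormU R.u (R.act v) := by
  classical
  set s := R.act v with hsdef
  have hfr : Module.finrank ℝ (E d) = Module.finrank ℝ (EuclideanSpace ℝ ↥s) := by
    simp [finrank_euclideanSpace, Fintype.card_coe, hcard]
  let e := (Tmap R v).linearEquivOfInjective (Tmap_inj R hv hD) hfr
  let g := LinearMap.toContinuousLinearMap (e.symm.toLinearMap)
  have hge : ∀ y, g y = e.symm y := fun y => rfl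
  have hg : ∀ x : E d, ‖x‖ ≤ ‖g‖ * ‖Tmap R v x‖ := by
    intro x
    have h1 : g (Tmap R v x) = x := by
      rw [hge]
      have : Tmap R v x = e x := (LinearMap.linearEquivOfInjective_apply _ _ x).symm
      rw [this, LinearEquiv.symm_apply_apply]
    calc ‖x‖ = ‖g (Tmap R v x)‖ := by rw [h1]
      _ ≤ ‖g‖ * ‖Tmap R v x‖ := g.le_opNorm _
  have hbdd : BddAbove {c | ∃ x : E d, Real.sqrt (∑ j ∈ s, (⟪R.u j, x⟫)^2) ≤ 1 ∧ c = ‖x‖} := by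
    refine ⟨‖g‖, ?_⟩
    rintro c ⟨x, hx1, rfl⟩
    calc ‖x‖ ≤ ‖g‖ * ‖Tmap R v x‖ := hg x
      _ ≤ ‖g‖ * 1 := by
          apply mul_le_mul_of_nonneg_left _ (norm_nonneg g)
          rw [Tmap_norm]; exact hx1
      _ = ‖g‖ := mul_one _
  have h0mem : (0:ℝ) ∈ {c | ∃ x : E d, Real.sqrt (∑ j ∈ s, (⟪R.u j, x⟫)^2) ≤ 1 ∧ c = ‖x‖} := by
    refine ⟨0, ?_, by simp⟩
    simp [inner_zero_right]
  have hnn : 0 ≤ invNormU R.u s := le_csSup hbdd h0mem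
  refine ⟨fun x => ?_, hnn⟩
  set nx := Real.sqrt (∑ j ∈ s, (⟪R.u j, x⟫)^2) with hnx
  have hnx0 : 0 ≤ nx := Real.sqrt_nonneg _
  rcases eq_or_lt_of_le hnx0 with h0 | hpos
  · have hTx : ‖Tmap R v x‖ = 0 := by rw [Tmap_norm, ← hsdef, ← hnx, ← h0]
    have : Tmap R v x = 0 := norm_eq_zero.mp hTx
    have hx0 : x = 0 := by
      apply Tmap_inj R hv hD
      rw [this, map_zero]
    rw [hx0, ← h0]
    simp
  · have hscale : Real.sqrt (∑ j ∈ s, (⟪R.u j, nx⁻¹ • x⟫)^2) = 1 := by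
      have : ∀ j, (⟪R.u j, nx⁻¹ • x⟫ : ℝ)^2 = nx⁻¹^2 * (⟪R.u j, x⟫)^2 := by
        intro j; rw [real_inner_smul_right]; ring
      rw [Finset.sum_congr rfl fun j _ => this j, ← Finset.mul_sum, Real.sqrt_mul (sq_nonneg _),
        Real.sqrt_sq (inv_nonneg.mpr hnx0), ← hnx, inv_mul_cancel₀ hpos.ne']
    have hmem : ‖(nx⁻¹ • x : E d)‖ ∈
        {c | ∃ x : E d, Real.sqrt (∑ j ∈ s, (⟪R.u j, x⟫)^2) ≤ 1 ∧ c = ‖x‖} :=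
      ⟨nx⁻¹ • x, le_of_eq hscale, rfl⟩
    have hle := le_csSup hbdd hmem
    rw [norm_smul, Real.norm_eq_abs, abs_of_nonneg (inv_nonneg.mpr hnx0)] at hle
    have : ‖x‖ * nx⁻¹ ≤ invNormU R.u s := by rw [mul_comm]; exact hle
    calc ‖x‖ = ‖x‖ * nx⁻¹ * nx := by field_simp
      _ ≤ invNormU R.u s * nx := mul_le_mul_of_nonneg_right this hnx0

end Aux3
section Aux4

variable {d m : ℕ}

/-- Every linear functional is maximized over `P` at some vertex. -/
lemma vertex_max (R : FacetRep d m) (y : E d) :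
    ∃ v ∈ vertices R.P, ∀ z ∈ R.P, ⟪y, z⟫ ≤ ⟪y, v⟫ := by
  obtain ⟨z, hz, hmax⟩ := R.compact.exists_isMaxOn (Pne R) (inner_cont y).continuousOn
  set F : Set (E d) := {x ∈ R.P | ∀ w ∈ R.P, ⟪y, w⟫ ≤ ⟪y, x⟫} with hF
  have hzF : z ∈ F := ⟨hz, fun w hw => hmax hw⟩
  have hexp : IsExposed ℝ R.P F := by
    intro _
    exact ⟨innerSL ℝ y, by simp [hF, innerSL_apply_apply]⟩
  have hFclosed : IsClosed F := hexp.isClosed R.compact.isClosed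
  have hFcompact : IsCompact F := R.compact.of_isClosed_subset hFclosed (fun x hx => hx.1)
  obtain ⟨w, hw⟩ := hFcompact.extremePoints_nonempty ⟨z, hzF⟩
  refine ⟨w, ?_, (hw.1).2⟩
  exact hexp.isExtreme.extremePoints_subset_extremePoints hw

set_option maxHeartbeats 1000000 in
/-- Farkas-type lemma: if `y` is maximized over the polyhedron `{x | ∀ j, ⟪u j, x⟫ ≤ c j}`
at a point `p` whose tight constraints are exactly those of the vertex `v`, then `y` is a
nonnegative combination of the active normals at `v`. -/
lemma farkas (R : FacetRep d m) {v : E d} (hv : v ∈ vertices R.P)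
    (hD : 0 < Metric.diam R.P) (hcard : (R.act v).card = d)
    (c : Fin m → ℝ) (p : E d)
    (hpeq : ∀ j ∈ R.act v, ⟪R.u j, p⟫ = c j)
    (hplt : ∀ j ∉ R.act v, ⟪R.u j, p⟫ < c j)
    (y : E d)
    (hy : ∀ x : E d, (∀ j, ⟪R.u j, x⟫ ≤ c j) → ⟪y, x⟫ ≤ ⟪y, p⟫) :
    ∃ lam : Fin m → ℝ, (∀ j, 0 ≤ lam j) ∧ y = ∑ j ∈ R.act v, lam j • R.u j := by
  classical
  set B := actBasis R hv hD hcard with hB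
  set C : Set (E d) :=
    {x | ∃ μ : ↥(R.act v) → ℝ, (∀ j, 0 ≤ μ j) ∧ x = ∑ j : ↥(R.act v), μ j • R.u j.1} with hC
  have hCim : C = (⇑B.equivFun.symm) '' {μ : ↥(R.act v) → ℝ | ∀ j, 0 ≤ μ j} := by
    ext x
    constructor
    · rintro ⟨μ, hμ, rfl⟩
      refine ⟨μ, hμ, ?_⟩
      rw [Module.Basis.equivFun_symm_apply]
      refine Finset.sum_congr rfl fun j _ => ?_
      rw [hB, actBasis_coe]
    · rintro ⟨μ, hμ, rfl⟩
      refine ⟨μ, hμ, ?_⟩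
      rw [Module.Basis.equivFun_symm_apply]
      refine Finset.sum_congr rfl fun j _ => ?_
      rw [hB, actBasis_coe]
  have horth : IsClosed {μ : ↥(R.act v) → ℝ | ∀ j, 0 ≤ μ j} := by
    have : {μ : ↥(R.act v) → ℝ | ∀ j, 0 ≤ μ j} =
        ⋂ j, (fun μ : ↥(R.act v) → ℝ => μ j) ⁻¹' Set.Ici 0 := by
      ext; simp [Set.mem_iInter]
    rw [this]
    exact isClosed_iInter fun j => (isClosed_Ici).preimage (continuous_apply j)
  have horthc : Convex ℝ {μ : ↥(R.act v) → ℝ | ∀ j, 0 ≤ μ j} := by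
    have : {μ : ↥(R.act v) → ℝ | ∀ j, 0 ≤ μ j} =
        Set.pi Set.univ (fun _ => Set.Ici (0:ℝ)) := by
      ext μ; simp [Set.mem_pi, Subtype.forall, Pi.le_def]
    rw [this]
    exact convex_pi fun _ _ => convex_Ici 0
  set hcle : E d ≃L[ℝ] (↥(R.act v) → ℝ) := B.equivFun.toContinuousLinearEquiv with hhcle
  have hcoe : ⇑B.equivFun.symm = ⇑hcle.symm := rfl
  have hCconvex : Convex ℝ C := by
    rw [hCim, ← LinearEquiv.coe_toLinearMap]
    exact horthc.linear_image _
  have hCclosed : IsClosed C := by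
    rw [hCim, hcoe]
    exact (hcle.symm.toHomeomorph).isClosedMap _ horth
  clear_value B hcle
  by_cases hyC : y ∈ C
  · obtain ⟨μ, hμ, hrep⟩ := hyC
    refine ⟨fun j => if h : j ∈ R.act v then μ ⟨j, h⟩ else 0, fun j => ?_, ?_⟩
    · by_cases h : j ∈ R.act v <;> simp [h, hμ]
    · rw [← Finset.sum_attach (R.act v)
        (fun j => (if h : j ∈ R.act v then μ ⟨j, h⟩ else 0) • R.u j), hrep,
        Finset.univ_eq_attach]
      refine Finset.sum_congr rfl fun j _ => ?_
      rw [dif_pos j.2]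
  · exfalso
    obtain ⟨f, sf, hfC, hfy⟩ := geometric_hahn_banach_closed_point hCconvex hCclosed hyC
    set w : E d := (InnerProductSpace.toDual ℝ (E d)).symm f with hw
    have hwf : ∀ x, ⟪w, x⟫ = f x := fun x => InnerProductSpace.toDual_symm_apply
    have h0C : (0 : E d) ∈ C := ⟨0, fun j => le_refl 0, by simp⟩
    have hsf0 : 0 < sf := by have := hfC 0 h0C; simpa using this
    clear_value w
    have hfneg : ∀ j ∈ R.act v, f (R.u j) ≤ 0 := by
      intro j hj
      by_contra hpos
      push_neg at hpos
      set t : ℝ := (sf + 1) / f (R.u j) with ht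
      have htpos : 0 < t := div_pos (by linarith) hpos
      have htC : t • R.u j ∈ C := by
        refine ⟨fun i => if i = ⟨j, hj⟩ then t else 0, fun i => ?_, ?_⟩
        · dsimp only
          split
          · exact htpos.le
          · exact le_refl 0
        have hcongr : ∀ i : ↥(R.act v),
            (if i = (⟨j, hj⟩ : ↥(R.act v)) then t else 0) • R.u i.1
              = if i = (⟨j, hj⟩ : ↥(R.act v)) then t • R.u j else 0 := by
          intro i
          by_cases h : i = ⟨j, hj⟩
          · subst h; simp
          · simp [h]
        rw [Finset.sum_congr rfl fun i _ => hcongr i, Fintype.sum_ite_eq']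
      have := hfC _ htC
      rw [_root_.map_smul, smul_eq_mul, ht, div_mul_cancel₀ _ hpos.ne'] at this
      linarith
    clear_value C
    -- perturbation: p + t • w stays feasible for small t > 0, contradicting maximality
    set sI : Finset (Fin m) := Finset.univ.filter (fun j => j ∉ R.act v) with hsI
    set cs : Finset ℝ := insert (1:ℝ) (sI.image fun j => c j - ⟪R.u j, p⟫) with hcs
    have hcsne : cs.Nonempty := ⟨1, Finset.mem_insert_self _ _⟩
    set δ : ℝ := cs.min' hcsne with hδ
    have hδ0 : 0 < δ := by
      rw [hδ, Finset.lt_min'_iff]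
      intro z hz
      rcases Finset.mem_insert.mp hz with h | h
      · simp [h]
      · obtain ⟨j, hj, rfl⟩ := Finset.mem_image.mp h
        have := hplt j (by simpa [hsI] using hj)
        linarith
    have hδle : ∀ j, j ∉ R.act v → δ ≤ c j - ⟪R.u j, p⟫ := by
      intro j hj
      exact Finset.min'_le _ _ (Finset.mem_insert_of_mem (Finset.mem_image_of_mem _
        (by simp [hsI, hj])))
    set t : ℝ := δ / (‖w‖ + 1) with ht
    have hwpos : (0:ℝ) < ‖w‖ + 1 := by positivity
    have htpos : 0 < t := div_pos hδ0 hwpos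
    have hfeas : ∀ j, ⟪R.u j, p + t • w⟫ ≤ c j := by
      intro j
      rw [inner_add_right, real_inner_smul_right]
      by_cases hj : j ∈ R.act v
      · have h1 : ⟪R.u j, w⟫ ≤ 0 := by
          rw [real_inner_comm, hwf]
          exact hfneg j hj
        have := hpeq j hj
        nlinarith
      · have h1 : ⟪R.u j, w⟫ ≤ ‖w‖ := by
          have := abs_real_inner_le_norm (R.u j) w
          rw [(R.facet j).1, one_mul] at this
          exact le_trans (le_abs_self _) this
        have h2 : t * ⟪R.u j, w⟫ ≤ t * ‖w‖ := mul_le_mul_of_nonneg_left h1 htpos.le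
        have h3 : t * ‖w‖ < δ := by
          rw [ht, div_mul_eq_mul_div, div_lt_iff₀ hwpos]
          nlinarith [norm_nonneg w]
        have h4 := hδle j hj
        linarith
    clear_value t δ cs
    have hcontr := hy _ hfeas
    rw [inner_add_right, real_inner_smul_right] at hcontr
    have h5 : t * ⟪y, w⟫ ≤ 0 := by linarith
    have h6 : ⟪y, w⟫ ≤ 0 := by
      by_contra hpos6
      push_neg at hpos6
      have := mul_pos htpos hpos6
      linarith
    have h7 : 0 < ⟪y, w⟫ := by
      rw [real_inner_comm, hwf]
      linarith
    linarith

/-- Converse direction: a nonnegative combination of active normals is maximized at any point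
tight on the active constraints. -/
lemma farkas_conv (R : FacetRep d m) (v : E d) (c : Fin m → ℝ) (p : E d)
    (hpeq : ∀ j ∈ R.act v, ⟪R.u j, p⟫ = c j)
    {y : E d} {lam : Fin m → ℝ} (hlam : ∀ j, 0 ≤ lam j)
    (hrep : y = ∑ j ∈ R.act v, lam j • R.u j) :
    ∀ x : E d, (∀ j, ⟪R.u j, x⟫ ≤ c j) → ⟪y, x⟫ ≤ ⟪y, p⟫ := by
  intro x hx
  rw [hrep, sum_inner, sum_inner]
  refine Finset.sum_le_sum fun j hj => ?_
  rw [real_inner_smul_left, real_inner_smul_left]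
  apply mul_le_mul_of_nonneg_left _ (hlam j)
  rw [hpeq j hj]
  exact hx j

end Aux4
section Aux5

variable {d m : ℕ}

lemma q_eq_zero_inner (R : FacetRep d m) (hD : 0 < Metric.diam R.P) {x : E d} {j : Fin m}
    (h : R.q x j = 0) : ⟪R.u j, x⟫ = supp R.P (R.u j) := by
  rw [q_def, div_eq_zero_iff] at h
  rcases h with h | h
  · linarith
  · exact absurd h hD.ne'

lemma q_pos_inner (R : FacetRep d m) (hD : 0 < Metric.diam R.P) {x : E d} {j : Fin m}
    (h : 0 < R.q x j) : ⟪R.u j, x⟫ < supp R.P (R.u j) := by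
  rw [q_def] at h
  rcases div_pos_iff.mp h with ⟨h1, -⟩ | ⟨-, h2⟩
  · linarith
  · linarith

lemma q_gt_neg_inner (R : FacetRep d m) (hD : 0 < Metric.diam R.P) {x : E d} {j : Fin m}
    {ε : ℝ} (h : -ε < R.q x j) :
    ⟪R.u j, x⟫ < supp R.P (R.u j) + ε * Metric.diam R.P := by
  rw [q_def, lt_div_iff₀ hD] at h
  linarith

lemma two_vertices (R : FacetRep d m) (hd : 2 ≤ d) :
    ∃ v ∈ vertices R.P, ∃ j, R.q v j ≠ 0 := by
  have hD := diam_pos R hd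
  by_contra hcon
  push_neg at hcon
  obtain ⟨x₀, hx₀⟩ := R.fulldim
  obtain ⟨r, hr, hball⟩ := Metric.isOpen_iff.mp isOpen_interior x₀ hx₀
  set y : E d := EuclideanSpace.single (⟨0, by omega⟩ : Fin d) (1 : ℝ) with hy
  have hyn : ‖y‖ = 1 := by simp [hy]
  have hdist : dist (x₀ + (r/2) • y) x₀ = r/2 := by
    rw [dist_self_add_left, norm_smul, hyn, mul_one, Real.norm_eq_abs,
      abs_of_pos (by linarith : (0:ℝ) < r/2)]
  have h2 : x₀ + (r/2) • y ∈ R.P := by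
    apply interior_subset; apply hball
    rw [Metric.mem_ball, hdist]; linarith
  have h1 : x₀ ∈ R.P := interior_subset hx₀
  obtain ⟨v₁, hv₁, hmax₁⟩ := vertex_max R y
  obtain ⟨v₂, hv₂, hmax₂⟩ := vertex_max R (-y)
  have hyy : (⟪y, y⟫ : ℝ) = 1 := by
    rw [real_inner_self_eq_norm_mul_norm, hyn, mul_one]
  have hip : (⟪y, x₀ + (r/2) • y⟫ : ℝ) = ⟪y, x₀⟫ + r/2 := by
    rw [inner_add_right, real_inner_smul_right, hyy, mul_one]
  have ha := hmax₁ _ h2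
  have hb := hmax₂ _ h1
  rw [inner_neg_left, inner_neg_left] at hb
  have hlt : ⟪y, v₂⟫ < ⟪y, v₁⟫ := by
    rw [hip] at ha
    linarith
  have hv12 : v₁ = v₂ := by
    have h0 := span_act R hv₁ hD (y := v₁ - v₂) (fun j hj => by
      rw [inner_sub_right, q_eq_zero_inner R hD (hcon v₁ hv₁ j),
        q_eq_zero_inner R hD (hcon v₂ hv₂ j), sub_self])
    exact sub_eq_zero.mp h0
  rw [hv12] at hlt
  exact lt_irrefl _ hlt

lemma gamSet_bdd (R : FacetRep d m) :
    BddAbove {c | ∃ v ∈ vertices R.P, ∃ j, R.q v j ≠ 0 ∧ c = 1 - R.q v j} := by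
  refine ⟨1, ?_⟩
  rintro c ⟨v, hv, j, hne, rfl⟩
  have := q_nonneg R hv.1 j
  linarith

lemma le_gam (R : FacetRep d m) {v : E d} (hv : v ∈ vertices R.P) {j : Fin m}
    (hne : R.q v j ≠ 0) : 1 - R.q v j ≤ R.gam :=
  le_csSup (gamSet_bdd R) ⟨v, hv, j, hne, rfl⟩

lemma gam_nonneg (R : FacetRep d m) (hd : 2 ≤ d) : 0 ≤ R.gam := by
  have hD := diam_pos R hd
  obtain ⟨v, hv, j, hne⟩ := two_vertices R hd
  have h1 := le_gam R hv hne
  have h2 := q_le_one R hD hv.1 j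
  linarith

lemma Peps_convex (R : FacetRep d m) (ε : ℝ) : Convex ℝ (R.Peps ε) := by
  intro x hx y hy a b ha hb hab
  intro j
  show -ε ≤ R.q (a • x + b • y) j
  rw [q_combo R hab]
  have h1 : a * (-ε) ≤ a * R.q x j := mul_le_mul_of_nonneg_left (hx j) ha
  have h2 : b * (-ε) ≤ b * R.q y j := mul_le_mul_of_nonneg_left (hy j) hb
  have h3 : a * (-ε) + b * (-ε) = -ε := by linear_combination (-ε) * hab
  linarith

lemma supp_eq_iff (Q : Set (E d)) (hQ : IsCompact Q) {x₀ : E d} (hx₀ : x₀ ∈ Q) (y : E d) :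
    ⟪y, x₀⟫ = supp Q y ↔ ∀ z ∈ Q, ⟪y, z⟫ ≤ ⟪y, x₀⟫ := by
  constructor
  · intro h z hz
    rw [h]
    exact le_csSup ((hQ.image (inner_cont y)).bddAbove) (Set.mem_image_of_mem _ hz)
  · intro h
    exact (IsGreatest.csSup_eq ⟨Set.mem_image_of_mem _ hx₀, by
      rintro c ⟨z, hz, rfl⟩; exact h z hz⟩).symm

end Aux5
set_option maxHeartbeats 2000000 in
theorem statement11 (d m : ℕ) (hd : 2 ≤ d) (R : FacetRep d m) (hs : R.Simple)
    (V : Finset (E d)) (hV : (↑V : Set (E d)) = vertices R.P)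
    (ε : ℝ) (hε0 : 0 ≤ ε) (hε : ε < (1 - R.gam) / (Real.sqrt d * alpha R V))
    (vε : E d → E d) (hvε : ∀ v ∈ V, ∀ j ∈ R.act v, R.q (vε v) j = -ε) :
    vertices (R.Peps ε) = vε '' ↑V ∧
    (∀ v ∈ V, normalCone (R.Peps ε) (vε v) = normalCone R.P v) ∧
    (∀ x ∈ R.Peps ε, ∀ j, R.q x j ≤ 2) ∧
    (∀ v ∈ V, ∀ j, -(ε * Real.sqrt d * alpha R V) ≤ R.q (vε v) j) ∧
    (∀ v ∈ V, ∀ j ∉ R.act v, 1 - R.gam - ε * Real.sqrt d * alpha R V ≤ R.q (vε v) j) ∧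
    0 < 1 - R.gam - ε * Real.sqrt d * alpha R V := by
  classical
  have hD := diam_pos R hd
  have hvert : ∀ v, v ∈ V ↔ v ∈ vertices R.P := by
    intro v
    rw [← hV, Finset.mem_coe]
  have hcard : ∀ v ∈ V, (R.act v).card = d := fun v hv => hs v ((hvert v).mp hv)
  have hsd : 0 < Real.sqrt d := Real.sqrt_pos.mpr (by positivity)
  -- nonemptiness of V
  have hVne : V.Nonempty := by
    by_contra hne
    rw [Finset.not_nonempty_iff_eq_empty] at hne
    have hset : {a : ℝ | ∃ v ∈ V, a = invNormU R.u (R.act v)} = ∅ := by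
      ext a; simp [hne]
    have hzero : alpha R V = 0 := by
      rw [alpha, hset, Real.sSup_empty]
    rw [hzero, mul_zero, div_zero] at hε
    linarith
  obtain ⟨v₀, hv₀⟩ := hVne
  have hbddA : BddAbove {a : ℝ | ∃ v ∈ V, a = invNormU R.u (R.act v)} := by
    have him : {a : ℝ | ∃ v ∈ V, a = invNormU R.u (R.act v)}
        = (fun v => invNormU R.u (R.act v)) '' ↑V := by
      ext a
      simp only [Set.mem_setOf_eq, Set.mem_image, Finset.mem_coe]
      constructor
      · rintro ⟨v, hv, rfl⟩; exact ⟨v, hv, rfl⟩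
      · rintro ⟨v, hv, rfl⟩; exact ⟨v, hv, rfl⟩
    rw [him]
    exact (V.finite_toSet.image _).bddAbove
  have hαge : ∀ v ∈ V, invNormU R.u (R.act v) ≤ alpha R V := fun v hv =>
    le_csSup hbddA ⟨v, hv, rfl⟩
  have hα0 : 0 ≤ alpha R V :=
    le_trans (norm_le_invNormU R ((hvert v₀).mp hv₀) hD (hcard v₀ hv₀)).2 (hαge v₀ hv₀)
  have hαpos : 0 < alpha R V := by
    rcases hα0.lt_or_eq with h | h
    · exact h
    · exfalso
      rw [← h, mul_zero, div_zero] at hε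
      linarith
  have hβ0 : 0 < Real.sqrt d * alpha R V := mul_pos hsd hαpos
  have hkey : ε * (Real.sqrt d * alpha R V) < 1 - R.gam := (lt_div_iff₀ hβ0).mp hε
  have hg0 : 0 ≤ R.gam := gam_nonneg R hd
  have hεβ : 0 ≤ ε * (Real.sqrt d * alpha R V) := by positivity
  have hassoc : ε * Real.sqrt d * alpha R V = ε * (Real.sqrt d * alpha R V) := mul_assoc _ _ _
  -- inner products at the shifted vertices
  have hvinner : ∀ v ∈ V, ∀ j ∈ R.act v,
      ⟪R.u j, vε v⟫ = supp R.P (R.u j) + ε * Metric.diam R.P := by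
    intro v hv j hj
    have h := hvε v hv j hj
    rw [q_def, div_eq_iff hD.ne'] at h
    linarith
  -- distance estimate
  have hclose : ∀ v ∈ V, ∀ j, |R.q (vε v) j - R.q v j| ≤ ε * (Real.sqrt d * alpha R V) := by
    intro v hv j
    have hvVert := (hvert v).mp hv
    have hnorm := (norm_le_invNormU R hvVert hD (hcard v hv)).1 (vε v - v)
    have hsum : ∀ i ∈ R.act v, (⟪R.u i, vε v - v⟫ : ℝ)^2 = (ε * Metric.diam R.P)^2 := by
      intro i hi
      rw [inner_sub_right, hvinner v hv i hi,
        q_eq_zero_inner R hD ((mem_act R).mp hi)]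
      ring
    have hsum2 : ∑ i ∈ R.act v, (⟪R.u i, vε v - v⟫ : ℝ)^2
        = (d : ℝ) * (ε * Metric.diam R.P)^2 := by
      rw [Finset.sum_congr rfl hsum, Finset.sum_const, hcard v hv, nsmul_eq_mul]
    have hsqrt : Real.sqrt (∑ i ∈ R.act v, (⟪R.u i, vε v - v⟫ : ℝ)^2)
        = Real.sqrt d * (ε * Metric.diam R.P) := by
      rw [hsum2, Real.sqrt_mul (by positivity), Real.sqrt_sq (by positivity)]
    rw [hsqrt] at hnorm
    have hdist : ‖vε v - v‖ ≤ alpha R V * (Real.sqrt d * (ε * Metric.diam R.P)) :=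
      hnorm.trans (mul_le_mul_of_nonneg_right (hαge v hv) (by positivity))
    have hqdiff : R.q (vε v) j - R.q v j = ⟪R.u j, v - vε v⟫ / Metric.diam R.P := by
      rw [q_def, q_def, inner_sub_right, ← sub_div]
      ring_nf
    rw [hqdiff, abs_div, abs_of_pos hD, div_le_iff₀ hD]
    calc |⟪R.u j, v - vε v⟫| ≤ ‖R.u j‖ * ‖v - vε v‖ := abs_real_inner_le_norm _ _
      _ = ‖vε v - v‖ := by rw [(R.facet j).1, one_mul, norm_sub_rev]
      _ ≤ alpha R V * (Real.sqrt d * (ε * Metric.diam R.P)) := hdist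
      _ = ε * (Real.sqrt d * alpha R V) * Metric.diam R.P := by ring
  -- statement (iv)
  have hiv : ∀ v ∈ V, ∀ j, -(ε * (Real.sqrt d * alpha R V)) ≤ R.q (vε v) j := by
    intro v hv j
    have h1 := (abs_le.mp (hclose v hv j)).1
    have h2 := q_nonneg R ((hvert v).mp hv).1 j
    linarith
  -- statement (v)
  have hfive : ∀ v ∈ V, ∀ j ∉ R.act v,
      1 - R.gam - ε * (Real.sqrt d * alpha R V) ≤ R.q (vε v) j := by
    intro v hv j hj
    have hvVert := (hvert v).mp hv
    have hne : R.q v j ≠ 0 := by simpa [mem_act] using hj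
    have h1 := le_gam R hvVert hne
    have h2 := (abs_le.mp (hclose v hv j)).1
    linarith
  have hposc : 0 < 1 - R.gam - ε * (Real.sqrt d * alpha R V) := by linarith
  -- the shifted vertices lie in P_ε
  have hSP : ∀ v ∈ V, vε v ∈ R.Peps ε := by
    intro v hv j
    show -ε ≤ R.q (vε v) j
    by_cases hj : j ∈ R.act v
    · rw [hvε v hv j hj]
    · have := hfive v hv j hj
      linarith
  set S : Set (E d) := vε '' ↑V with hS
  have hSfin : S.Finite := V.finite_toSet.image _
  have hSsub : S ⊆ R.Peps ε := by
    rintro _ ⟨v, hv, rfl⟩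
    exact hSP v (Finset.mem_coe.mp hv)
  have hconvS : convexHull ℝ S ⊆ R.Peps ε := convexHull_min hSsub (Peps_convex R ε)
  -- the containment P_ε ⊆ conv S
  have hcontain : R.Peps ε ⊆ convexHull ℝ S := by
    intro x hx
    by_contra hxS
    obtain ⟨f, sf, hfS, hfx⟩ := geometric_hahn_banach_closed_point
      (convex_convexHull ℝ S) (hSfin.isClosed_convexHull ℝ) hxS
    set w : E d := (InnerProductSpace.toDual ℝ (E d)).symm f with hw
    have hwf : ∀ z, ⟪w, z⟫ = f z := fun z => InnerProductSpace.toDual_symm_apply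
    obtain ⟨v, hvv, hmax⟩ := vertex_max R w
    have hvV : v ∈ V := (hvert v).mpr hvv
    obtain ⟨lam, hlam, hrep⟩ := farkas R hvv hD (hcard v hvV)
      (fun j => supp R.P (R.u j)) v
      (fun j hj => q_eq_zero_inner R hD ((mem_act R).mp hj))
      (fun j hj => q_pos_inner R hD (q_pos_of_not_act R hvv.1 hj))
      w (fun z hz => hmax z ((mem_P_iff R hD z).mpr hz))
    have hxPeps := (mem_Peps_iff R hD ε x).mp hx
    have hle : ⟪w, x⟫ ≤ ⟪w, vε v⟫ := by
      rw [hrep, sum_inner, sum_inner]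
      refine Finset.sum_le_sum fun j hj => ?_
      rw [real_inner_smul_left, real_inner_smul_left]
      apply mul_le_mul_of_nonneg_left _ (hlam j)
      rw [hvinner v hvV j hj]
      exact hxPeps j
    have h1 : f (vε v) < sf := hfS _ (subset_convexHull ℝ S ⟨v, Finset.mem_coe.mpr hvV, rfl⟩)
    rw [hwf, hwf] at hle
    linarith
  have hPeq : R.Peps ε = convexHull ℝ S := Set.Subset.antisymm hcontain hconvS
  -- statement (i)
  have hSvert : vertices (R.Peps ε) = S := by
    apply Set.Subset.antisymm
    · intro x hx
      have hx' : x ∈ Set.extremePoints ℝ (convexHull ℝ S) := by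
        rw [← hPeq]
        exact hx
      exact extremePoints_convexHull_subset hx'
    · rintro _ ⟨v, hvc, rfl⟩
      have hv : v ∈ V := Finset.mem_coe.mp hvc
      have hvVert := (hvert v).mp hv
      show vε v ∈ Set.extremePoints ℝ (R.Peps ε)
      rw [mem_extremePoints]
      refine ⟨hSP v hv, fun x₁ hx₁ x₂ hx₂ hseg => ?_⟩
      obtain ⟨a, b, ha, hb, hab, hsum⟩ := hseg
      have hkeyj : ∀ j ∈ R.act v, R.q x₁ j = -ε ∧ R.q x₂ j = -ε := by
        intro j hj
        have h1 : a * R.q x₁ j + b * R.q x₂ j = -ε := by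
          rw [← q_combo R hab, hsum, hvε v hv j hj]
        have h2 : -ε ≤ R.q x₁ j := hx₁ j
        have h3 : -ε ≤ R.q x₂ j := hx₂ j
        have e0 : a * (R.q x₁ j + ε) + b * (R.q x₂ j + ε) = 0 := by
          linear_combination h1 + ε * hab
        have e1 : 0 ≤ b * (R.q x₂ j + ε) := mul_nonneg hb.le (by linarith)
        have e2 : 0 ≤ a * (R.q x₁ j + ε) := mul_nonneg ha.le (by linarith)
        have e3 : a * (R.q x₁ j + ε) = 0 := by linarith
        have e4 : b * (R.q x₂ j + ε) = 0 := by linarith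
        have e5 := (mul_eq_zero.mp e3).resolve_left ha.ne'
        have e6 := (mul_eq_zero.mp e4).resolve_left hb.ne'
        constructor <;> linarith
      have heq : ∀ z : E d, (∀ j ∈ R.act v, R.q z j = -ε) → z = vε v := by
        intro z hz
        have h0 := span_act R hvVert hD (y := z - vε v) (fun j hj => by
          have e1 : R.q z j = R.q (vε v) j := by rw [hz j hj, hvε v hv j hj]
          rw [q_def, q_def] at e1
          have e2 := congrArg (fun t => t * Metric.diam R.P) e1
          simp only [div_mul_cancel₀ _ hD.ne'] at e2
          rw [inner_sub_right]
          linarith)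
        exact sub_eq_zero.mp h0
      exact ⟨heq x₁ (fun j hj => (hkeyj j hj).1), heq x₂ (fun j hj => (hkeyj j hj).2)⟩
  -- statement (iii)
  have hiii : ∀ x ∈ R.Peps ε, ∀ j, R.q x j ≤ 2 := by
    intro x hx j
    have hx' : x ∈ convexHull ℝ S := hcontain hx
    have hconv2 : Convex ℝ {z : E d | R.q z j ≤ 2} := by
      intro z₁ h₁ z₂ h₂ a b ha hb hab
      show R.q (a • z₁ + b • z₂) j ≤ 2
      rw [q_combo R hab]
      have e1 : a * R.q z₁ j ≤ a * 2 := mul_le_mul_of_nonneg_left h₁ ha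
      have e2 : b * R.q z₂ j ≤ b * 2 := mul_le_mul_of_nonneg_left h₂ hb
      have e3 : a * 2 + b * 2 = 2 := by linear_combination 2 * hab
      linarith
    have hSsub2 : S ⊆ {z : E d | R.q z j ≤ 2} := by
      rintro _ ⟨v, hvc, rfl⟩
      have hv : v ∈ V := Finset.mem_coe.mp hvc
      have h1 := (abs_le.mp (hclose v hv j)).2
      have h2 := q_le_one R hD ((hvert v).mp hv).1 j
      show R.q (vε v) j ≤ 2
      linarith
    exact convexHull_min hSsub2 hconv2 hx'
  -- statement (ii)
  have hPepsCompact : IsCompact (R.Peps ε) := by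
    rw [hPeq]
    exact hSfin.isCompact_convexHull ℝ
  have hii : ∀ v ∈ V, normalCone (R.Peps ε) (vε v) = normalCone R.P v := by
    intro v hv
    have hvVert := (hvert v).mp hv
    ext y
    show ⟪y, vε v⟫ = supp (R.Peps ε) y ↔ ⟪y, v⟫ = supp R.P y
    rw [supp_eq_iff _ hPepsCompact (hSP v hv) y, supp_eq_iff _ R.compact hvVert.1 y]
    constructor
    · intro h
      obtain ⟨lam, hlam, hrep⟩ := farkas R hvVert hD (hcard v hv)
        (fun j => supp R.P (R.u j) + ε * Metric.diam R.P) (vε v)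
        (fun j hj => hvinner v hv j hj)
        (fun j hj => q_gt_neg_inner R hD (by
          have := hfive v hv j hj
          linarith))
        y (fun x hx => h x ((mem_Peps_iff R hD ε x).mpr hx))
      intro z hz
      exact farkas_conv R v (fun j => supp R.P (R.u j)) v
        (fun j hj => q_eq_zero_inner R hD ((mem_act R).mp hj)) hlam hrep z
        (fun j => (mem_P_iff R hD z).mp hz j)
    · intro h
      obtain ⟨lam, hlam, hrep⟩ := farkas R hvVert hD (hcard v hv)
        (fun j => supp R.P (R.u j)) v
        (fun j hj => q_eq_zero_inner R hD ((mem_act R).mp hj))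
        (fun j hj => q_pos_inner R hD (q_pos_of_not_act R hvVert.1 hj))
        y (fun x hx => h x ((mem_P_iff R hD x).mpr hx))
      intro z hz
      exact farkas_conv R v (fun j => supp R.P (R.u j) + ε * Metric.diam R.P) (vε v)
        (fun j hj => hvinner v hv j hj) hlam hrep z
        (fun j => (mem_Peps_iff R hD ε z).mp hz j)
  refine ⟨hSvert, hii, hiii, ?_, ?_, ?_⟩
  · intro v hv j
    rw [hassoc]
    exact hiv v hv j
  · intro v hv j hj
    rw [hassoc]
    exact hfive v hv j hj
  · rw [hassoc]
    exact hposc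
end AverkovHenk
end
end
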